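/- arXiv:2011.07408 — 8 statements merged into one kernel-verified Lean document; each statement's English description precedes it below -/
import Mathlib

section
/- Every separating set for the invariant ring F_q[V]^G contains at least γ = ⌈log_q(k)⌉ elements. Equivalently, if l_1, ..., l_r ∈ F_q[V]^G form a separating set, then k ≤ q^r. -/
open MvPolynomial

/-- The substitution action of a matrix `M` on polynomials, so that
`(polyAct M f)(v) = f (M.mulVec v)`.  Taking `M = g⁻¹` gives the action
`(g · f)(v) = f (g⁻¹ · v)` of a matrix group on the coordinate ring. -/
noncomputable def polyAct {F : Type*} [CommSemiring F] {n : ℕ}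
    (M : Matrix (Fin n) (Fin n) F) (f : MvPolynomial (Fin n) F) : MvPolynomial (Fin n) F :=
  aeval (fun i => ∑ j, C (M i j) * X j) f

/-- if `l 1, …, l r` are invariants forming a separating set for
`F_q[V]^G`, then `k ≤ q ^ r`; equivalently every separating set contains at least
`γ = ⌈log_q k⌉` elements. -/
theorem stmt0 {q n k r : ℕ} (F : Type*) [Field F] [Fintype F]
    (hq : Fintype.card F = q)
    (G : Subgroup (Matrix.GeneralLinearGroup (Fin n) F))
    (W : Fin k → Set (Fin n → F))
    (horb : ∀ j, ∃ w : Fin n → F, W j =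
      {u | ∃ g ∈ G, (g : Matrix (Fin n) (Fin n) F).mulVec w = u})
    (hcover : ∀ v : Fin n → F, ∃ j, v ∈ W j)
    (hdisj : ∀ j₁ j₂, j₁ ≠ j₂ → Disjoint (W j₁) (W j₂))
    (l : Fin r → MvPolynomial (Fin n) F)
    (hinv : ∀ i, ∀ g ∈ G,
      polyAct ((g⁻¹ : Matrix.GeneralLinearGroup (Fin n) F) : Matrix (Fin n) (Fin n) F)
        (l i) = l i)
    (hsep : ∀ u v : Fin n → F,
      (¬ ∃ g ∈ G, (g : Matrix (Fin n) (Fin n) F).mulVec u = v) →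
      ∃ i, eval u (l i) ≠ eval v (l i)) :
    k ≤ q ^ r ∧ Nat.clog q k ≤ r := by
  choose w hw using horb
  have hmem : ∀ j, w j ∈ W j := by
    intro j
    rw [hw j]
    exact ⟨1, G.one_mem, by simp⟩
  have hinj : Function.Injective (fun j i => eval (w j) (l i)) := by
    intro j₁ j₂ hj
    by_contra hne
    have hnot : ¬ ∃ g ∈ G, (g : Matrix (Fin n) (Fin n) F).mulVec (w j₁) = w j₂ := by
      rintro ⟨g, hg, hgv⟩
      have h1 : w j₁ ∈ W j₂ := by
        rw [hw j₂]
        refine ⟨g⁻¹, G.inv_mem hg, ?_⟩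
        rw [← hgv, Matrix.mulVec_mulVec]
        have : ((g⁻¹ : Matrix.GeneralLinearGroup (Fin n) F) : Matrix (Fin n) (Fin n) F) *
            (g : Matrix (Fin n) (Fin n) F) = 1 := by
          rw [← Matrix.GeneralLinearGroup.coe_mul, inv_mul_cancel]
          simp
        rw [this, Matrix.one_mulVec]
      exact (hdisj j₁ j₂ hne).ne_of_mem (hmem j₁) h1 rfl
    obtain ⟨i, hi⟩ := hsep (w j₁) (w j₂) hnot
    exact hi (congrFun hj i)
  have hcard : k ≤ q ^ r := by
    have := Fintype.card_le_of_injective _ hinj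
    simpa [hq] using this
  refine ⟨hcard, ?_⟩
  rcases le_or_gt q 1 with h | h
  · simp [Nat.clog_of_left_le_one h]
  · exact (Nat.clog_le_iff_le_pow h).mpr hcard
end

section
/- Let (a_{ij}) ∈ F^{γ×k} be a matrix whose columns are pairwise different and define t_i = a_{i1} n_1 + ... + a_{ik} n_k for 1 ≤ i ≤ γ. Then t_1, ..., t_γ form a minimal separating set for F_q[V]^G consisting of (possibly non-homogeneous) invariants of degree at most |G|·n·(q−1). -/
open MvPolynomial

/-- `f_w = (-1)^n ∏_i ∏_{a ∈ F \ {w_i}} (x_i - a)`, the indicator polynomial of `w`. -/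
noncomputable def fW {F : Type*} [Field F] [Fintype F] [DecidableEq F] {n : ℕ}
    (w : Fin n → F) : MvPolynomial (Fin n) F :=
  (-1) ^ n * ∏ i, ∏ a ∈ (Finset.univ \ {w i}), (X i - C a)

/-- `f_j = ∑_{w ∈ W_j} f_w`, the indicator polynomial of the subset `W ⊆ V`. -/
noncomputable def fOrb {F : Type*} [Field F] [Fintype F] [DecidableEq F] {n : ℕ}
    (W : Set (Fin n → F)) : MvPolynomial (Fin n) F :=
  ∑ w ∈ (Set.toFinite W).toFinset, fW w

/-- `n_j = ∏_{g ∈ G} (g · f)`, where `(g · f)(v) = f(g⁻¹ · v)`. -/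
noncomputable def nInvPoly {F : Type*} [Field F] [Fintype F] {n : ℕ}
    (G : Subgroup (Matrix.GeneralLinearGroup (Fin n) F)) (f : MvPolynomial (Fin n) F) :
    MvPolynomial (Fin n) F :=
  letI : Fintype G := Fintype.ofFinite G
  ∏ g : G, polyAct (((g : Matrix.GeneralLinearGroup (Fin n) F)⁻¹ :
      Matrix.GeneralLinearGroup (Fin n) F) : Matrix (Fin n) (Fin n) F) f

/-- The Reynolds average `h = (1/|G|) ∑_{g ∈ G} (g · f)`. -/
noncomputable def reynolds {F : Type*} [Field F] [Fintype F] {n : ℕ}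
    (G : Subgroup (Matrix.GeneralLinearGroup (Fin n) F)) (f : MvPolynomial (Fin n) F) :
    MvPolynomial (Fin n) F :=
  letI : Fintype G := Fintype.ofFinite G
  C ((Nat.card G : F)⁻¹) * ∑ g : G, polyAct (((g : Matrix.GeneralLinearGroup (Fin n) F)⁻¹ :
      Matrix.GeneralLinearGroup (Fin n) F) : Matrix (Fin n) (Fin n) F) f

/-- A monomial matrix: exactly one nonzero entry in each row and in each column. -/
def IsMonomialMatrix {F : Type*} [Zero F] {n : ℕ} (M : Matrix (Fin n) (Fin n) F) : Prop :=
  (∀ i, ∃! j, M i j ≠ 0) ∧ (∀ j, ∃! i, M i j ≠ 0)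

lemma eval_polyAct {F : Type*} [CommSemiring F] {n : ℕ}
    (M : Matrix (Fin n) (Fin n) F) (f : MvPolynomial (Fin n) F) (u : Fin n → F) :
    eval u (polyAct M f) = eval (M.mulVec u) f := by
  induction f using MvPolynomial.induction_on with
  | C a => simp [polyAct]
  | add p q hp hq => simp only [polyAct, map_add] at *; rw [hp, hq]
  | mul_X p i hp =>
      simp only [polyAct, map_mul, aeval_X, map_sum, aeval_C, eval_mul] at *
      rw [hp]
      congr 1
      simp [Matrix.mulVec, dotProduct, algebraMap_eq]
lemma polyAct_polyAct {F : Type*} [CommSemiring F] {n : ℕ}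
    (M N : Matrix (Fin n) (Fin n) F) (f : MvPolynomial (Fin n) F) :
    polyAct M (polyAct N f) = polyAct (N * M) f := by
  induction f using MvPolynomial.induction_on with
  | C a => simp [polyAct]
  | add p q hp hq => simp only [polyAct, map_add] at *; rw [hp, hq]
  | mul_X p i hp =>
      simp only [polyAct, map_mul, aeval_X, map_sum, aeval_C] at *
      rw [hp]
      congr 1
      simp only [Finset.mul_sum, Matrix.mul_apply, map_sum, Finset.sum_mul, mul_assoc]
      rw [Finset.sum_comm]
      simp [algebraMap_eq, map_mul, mul_assoc]
lemma prod_sdiff_zero {F : Type*} [Field F] [Fintype F] [DecidableEq F] :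
    ∏ b ∈ (Finset.univ \ {(0:F)}), b = -1 := by
  let φ : Fˣ ↪ F := ⟨fun x ↦ x, fun _ _ h => Units.ext h⟩
  have h : Finset.univ.map φ = Finset.univ \ {0} := by
    ext x
    simpa only [Finset.mem_map, Finset.mem_univ, Function.Embedding.coeFn_mk, true_and,
      Finset.mem_sdiff, Finset.mem_singleton, φ] using (show (∃ a : Fˣ, φ a = x) ↔ ¬x = 0 from isUnit_iff_ne_zero)
  rw [← h, Finset.prod_map]
  have := FiniteField.prod_univ_units_id_eq_neg_one (K := F)
  calc ∏ x : Fˣ, φ x = ((∏ x : Fˣ, x : Fˣ) : F) := by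
        simp [φ, Units.coeHom_apply, ← map_prod (Units.coeHom F)]; rfl
    _ = -1 := by rw [this]; simp
lemma prod_sdiff_c {F : Type*} [Field F] [Fintype F] [DecidableEq F] (c : F) :
    ∏ a ∈ (Finset.univ \ {c}), (c - a) = -1 := by
  rw [← prod_sdiff_zero (F := F)]
  apply Finset.prod_nbij (fun a => c - a)
  · intro a ha
    simp only [Finset.mem_sdiff, Finset.mem_univ, Finset.mem_singleton, true_and] at *
    intro h; apply ha; linear_combination -h
  · intro a ha b hb hab
    simpa using hab
  · intro b hb
    simp only [Finset.coe_sdiff, Finset.coe_univ, Finset.coe_singleton, Set.mem_diff,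
      Set.mem_univ, Set.mem_singleton_iff, true_and, Set.mem_image] at *
    exact ⟨c - b, by intro h; apply hb; linear_combination -h, by ring⟩
  · intro a ha; rfl
lemma eval_fW {F : Type*} [Field F] [Fintype F] [DecidableEq F] {n : ℕ}
    (w v : Fin n → F) : eval v (fW w) = if v = w then 1 else 0 := by
  rw [fW]
  simp only [map_mul, map_pow, map_prod, eval_sub, eval_X, eval_C, map_neg, map_one]
  by_cases h : v = w
  · subst h
    rw [if_pos rfl]
    have key : ∀ i, ∏ a ∈ (Finset.univ \ {v i}), (v i - a) = -1 := fun i => prod_sdiff_c (v i)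
    rw [Finset.prod_congr rfl (fun i _ => key i)]
    simp [← mul_pow]
  · rw [if_neg h]
    obtain ⟨i, hi⟩ := Function.ne_iff.mp h
    apply mul_eq_zero_of_right
    refine Finset.prod_eq_zero (Finset.mem_univ i) ?_
    have hmem : v i ∈ Finset.univ \ {w i} := by simp [hi]
    refine Finset.prod_eq_zero hmem (by ring)
lemma eval_fOrb_mem {F : Type*} [Field F] [Fintype F] [DecidableEq F] {n : ℕ}
    (W : Set (Fin n → F)) (v : Fin n → F) (h : v ∈ W) : eval v (fOrb W) = 1 := by
  classical
  rw [fOrb, map_sum, Finset.sum_congr rfl (fun w _ => eval_fW w v),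
    Finset.sum_eq_single v]
  · simp
  · intro b _ hb; simp [Ne.symm hb]
  · intro hv; exact absurd ((Set.toFinite W).mem_toFinset.mpr h) hv
lemma eval_fOrb_not_mem {F : Type*} [Field F] [Fintype F] [DecidableEq F] {n : ℕ}
    (W : Set (Fin n → F)) (v : Fin n → F) (h : v ∉ W) : eval v (fOrb W) = 0 := by
  classical
  rw [fOrb, map_sum, Finset.sum_congr rfl (fun w _ => eval_fW w v), Finset.sum_eq_zero]
  intro b hb
  have hbW : b ∈ W := (Set.toFinite W).mem_toFinset.mp hb
  have : v ≠ b := by rintro rfl; exact h hbW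
  simp [this]
lemma polyAct_prod {F : Type*} [CommSemiring F] {n : ℕ} {ι : Type*}
    (M : Matrix (Fin n) (Fin n) F) (s : Finset ι) (f : ι → MvPolynomial (Fin n) F) :
    polyAct M (∏ x ∈ s, f x) = ∏ x ∈ s, polyAct M (f x) :=
  map_prod (aeval _) _ _
lemma nInvPoly_invariant {F : Type*} [Field F] [Fintype F] {n : ℕ}
    (G : Subgroup (Matrix.GeneralLinearGroup (Fin n) F)) (f : MvPolynomial (Fin n) F)
    (g : Matrix.GeneralLinearGroup (Fin n) F) (hg : g ∈ G) :
    polyAct ((g⁻¹ : Matrix.GeneralLinearGroup (Fin n) F) : Matrix (Fin n) (Fin n) F)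
      (nInvPoly G f) = nInvPoly G f := by
  letI : Fintype G := Fintype.ofFinite G
  have hdef : nInvPoly G f = ∏ h : G, polyAct (((h : Matrix.GeneralLinearGroup (Fin n) F)⁻¹ :
      Matrix.GeneralLinearGroup (Fin n) F) : Matrix (Fin n) (Fin n) F) f := rfl
  rw [hdef, polyAct_prod]
  simp only [polyAct_polyAct]
  calc (∏ h : G, polyAct ((((h : Matrix.GeneralLinearGroup (Fin n) F)⁻¹ :
          Matrix.GeneralLinearGroup (Fin n) F) : Matrix (Fin n) (Fin n) F) *
          ((g⁻¹ : Matrix.GeneralLinearGroup (Fin n) F) : Matrix (Fin n) (Fin n) F)) f)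
      = ∏ h : G, polyAct (((((⟨g, hg⟩ : G) * h : G) : Matrix.GeneralLinearGroup (Fin n) F)⁻¹ :
          Matrix.GeneralLinearGroup (Fin n) F) : Matrix (Fin n) (Fin n) F) f := by
        apply Finset.prod_congr rfl
        intro h _
        congr 1
    _ = ∏ h : G, polyAct (((h : Matrix.GeneralLinearGroup (Fin n) F)⁻¹ :
          Matrix.GeneralLinearGroup (Fin n) F) : Matrix (Fin n) (Fin n) F) f :=
        Fintype.prod_equiv (Equiv.mulLeft (⟨g, hg⟩ : G)) _ _ (fun h => rfl)
lemma totalDegree_polyAct_le {F : Type*} [Field F] {n : ℕ}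
    (M : Matrix (Fin n) (Fin n) F) (f : MvPolynomial (Fin n) F) :
    (polyAct M f).totalDegree ≤ f.totalDegree := by
  rw [polyAct]
  conv_lhs => rw [f.as_sum]
  rw [map_sum]
  apply totalDegree_finsetSum_le
  intro d hd
  rw [aeval_monomial]
  refine (totalDegree_mul _ _).trans ?_
  rw [show (algebraMap F (MvPolynomial (Fin n) F)) (coeff d f) = C (coeff d f) from rfl,
    totalDegree_C, zero_add]
  refine le_trans ?_ (le_totalDegree hd)
  rw [Finsupp.prod, Finsupp.sum]
  refine (totalDegree_finset_prod _ _).trans (Finset.sum_le_sum ?_)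
  intro i _
  refine (totalDegree_pow _ _).trans ?_
  have hs : (∑ j, C (M i j) * X j).totalDegree ≤ 1 := by
    apply totalDegree_finsetSum_le
    intro j _
    refine (totalDegree_mul _ _).trans ?_
    simp [totalDegree_C, totalDegree_X]
  calc d i * (∑ j, C (M i j) * X j).totalDegree ≤ d i * 1 := Nat.mul_le_mul_left _ hs
    _ = d i := Nat.mul_one _
lemma totalDegree_fW_le {F : Type*} [Field F] [Fintype F] [DecidableEq F] {n : ℕ}
    (w : Fin n → F) : (fW w).totalDegree ≤ n * (Fintype.card F - 1) := by
  rw [fW]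
  refine (totalDegree_mul _ _).trans ?_
  rw [show ((-1 : MvPolynomial (Fin n) F)) ^ n = C ((-1) ^ n) by simp, totalDegree_C, zero_add]
  refine (totalDegree_finset_prod _ _).trans ?_
  calc ∑ i : Fin n, (∏ a ∈ (Finset.univ \ {w i}), (X i - C a)).totalDegree
      ≤ ∑ _i : Fin n, (Fintype.card F - 1) := by
        apply Finset.sum_le_sum
        intro i _
        refine (totalDegree_finset_prod _ _).trans ?_
        calc ∑ a ∈ (Finset.univ \ {w i}), (X i - C a).totalDegree
            ≤ ∑ _a ∈ (Finset.univ \ {w i}), 1 := by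
              apply Finset.sum_le_sum
              intro a _
              rw [sub_eq_add_neg, ← map_neg C]
              refine (totalDegree_add _ _).trans ?_
              simp [totalDegree_X, totalDegree_C]
          _ = Fintype.card F - 1 := by
              rw [Finset.sum_const, smul_eq_mul, mul_one, Finset.card_sdiff_of_subset (by simp),
                Finset.card_singleton, Finset.card_univ]
    _ = n * (Fintype.card F - 1) := by simp [Finset.sum_const, mul_comm]
lemma orbit_smul_mem {F : Type*} [Field F] [Fintype F] {n : ℕ}
    (G : Subgroup (Matrix.GeneralLinearGroup (Fin n) F)) (w : Fin n → F)
    (g : Matrix.GeneralLinearGroup (Fin n) F) (hg : g ∈ G) (v : Fin n → F)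
    (hv : v ∈ {u | ∃ g ∈ G, (g : Matrix (Fin n) (Fin n) F).mulVec w = u}) :
    ((g : Matrix (Fin n) (Fin n) F).mulVec v) ∈
      {u | ∃ g ∈ G, (g : Matrix (Fin n) (Fin n) F).mulVec w = u} := by
  obtain ⟨g₀, hg₀, rfl⟩ := hv
  exact ⟨g * g₀, mul_mem hg hg₀, by rw [Units.val_mul, ← Matrix.mulVec_mulVec]⟩
lemma inv_mulVec_mulVec {F : Type*} [Field F] {n : ℕ}
    (g : Matrix.GeneralLinearGroup (Fin n) F) (v : Fin n → F) :
    (g : Matrix (Fin n) (Fin n) F).mulVec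
      (((g⁻¹ : Matrix.GeneralLinearGroup (Fin n) F) : Matrix (Fin n) (Fin n) F).mulVec v) = v := by
  rw [Matrix.mulVec_mulVec, ← Units.val_mul, mul_inv_cancel]
  simp
lemma orbit_smul_mem_iff {F : Type*} [Field F] [Fintype F] {n : ℕ}
    (G : Subgroup (Matrix.GeneralLinearGroup (Fin n) F)) (w : Fin n → F)
    (g : Matrix.GeneralLinearGroup (Fin n) F) (hg : g ∈ G) (v : Fin n → F) :
    (((g⁻¹ : Matrix.GeneralLinearGroup (Fin n) F) : Matrix (Fin n) (Fin n) F).mulVec v) ∈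
      {u | ∃ g ∈ G, (g : Matrix (Fin n) (Fin n) F).mulVec w = u} ↔
    v ∈ {u | ∃ g ∈ G, (g : Matrix (Fin n) (Fin n) F).mulVec w = u} := by
  constructor
  · intro h
    have := orbit_smul_mem G w g hg _ h
    rwa [inv_mulVec_mulVec] at this
  · intro h
    exact orbit_smul_mem G w g⁻¹ (inv_mem hg) v h
lemma eval_nInvPoly_orbit_aux {F : Type*} [Field F] [Fintype F] [DecidableEq F] {n : ℕ}
    (G : Subgroup (Matrix.GeneralLinearGroup (Fin n) F)) (W : Set (Fin n → F))
    (w : Fin n → F)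
    (hW : W = {u | ∃ g ∈ G, (g : Matrix (Fin n) (Fin n) F).mulVec w = u})
    (v : Fin n → F) :
    (v ∈ W → eval v (nInvPoly G (fOrb W)) = 1) ∧
    (v ∉ W → eval v (nInvPoly G (fOrb W)) = 0) := by
  classical
  letI : Fintype G := Fintype.ofFinite G
  have hdef : nInvPoly G (fOrb W) = ∏ h : G,
      polyAct (((h : Matrix.GeneralLinearGroup (Fin n) F)⁻¹ :
      Matrix.GeneralLinearGroup (Fin n) F) : Matrix (Fin n) (Fin n) F) (fOrb W) := rfl
  have hterm : ∀ h : G, eval v (polyAct (((h : Matrix.GeneralLinearGroup (Fin n) F)⁻¹ :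
      Matrix.GeneralLinearGroup (Fin n) F) : Matrix (Fin n) (Fin n) F) (fOrb W)) =
      eval ((((h : Matrix.GeneralLinearGroup (Fin n) F)⁻¹ :
      Matrix.GeneralLinearGroup (Fin n) F) : Matrix (Fin n) (Fin n) F).mulVec v) (fOrb W) :=
    fun h => eval_polyAct _ _ _
  constructor
  · intro hv
    rw [hdef, map_prod, Finset.prod_congr rfl (fun h _ => hterm h)]
    apply Finset.prod_eq_one
    intro h _
    apply eval_fOrb_mem
    rw [hW]
    exact (orbit_smul_mem_iff G w h h.2 v).mpr (hW ▸ hv)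
  · intro hv
    rw [hdef, map_prod, Finset.prod_congr rfl (fun h _ => hterm h)]
    apply Finset.prod_eq_zero (Finset.mem_univ (1 : G))
    apply eval_fOrb_not_mem
    intro hmem
    apply hv
    rw [hW]
    refine (orbit_smul_mem_iff G w 1 (one_mem G) v).mp ?_
    rw [hW] at hmem
    exact hmem
lemma polyAct_sum {F : Type*} [CommSemiring F] {n : ℕ} {ι : Type*}
    (M : Matrix (Fin n) (Fin n) F) (s : Finset ι) (f : ι → MvPolynomial (Fin n) F) :
    polyAct M (∑ x ∈ s, f x) = ∑ x ∈ s, polyAct M (f x) :=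
  map_sum (aeval _) _ _
lemma polyAct_C_mul {F : Type*} [CommSemiring F] {n : ℕ}
    (M : Matrix (Fin n) (Fin n) F) (c : F) (p : MvPolynomial (Fin n) F) :
    polyAct M (C c * p) = C c * polyAct M p := by
  rw [polyAct, map_mul, aeval_C, polyAct, algebraMap_eq]
lemma totalDegree_nInvPoly_le {F : Type*} [Field F] [Fintype F] {n : ℕ}
    (G : Subgroup (Matrix.GeneralLinearGroup (Fin n) F)) (f : MvPolynomial (Fin n) F) {d : ℕ}
    (hf : f.totalDegree ≤ d) :
    (nInvPoly G f).totalDegree ≤ Nat.card G * d := by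
  letI : Fintype G := Fintype.ofFinite G
  have hdef : nInvPoly G f = ∏ h : G,
      polyAct (((h : Matrix.GeneralLinearGroup (Fin n) F)⁻¹ :
      Matrix.GeneralLinearGroup (Fin n) F) : Matrix (Fin n) (Fin n) F) f := rfl
  rw [hdef]
  refine (totalDegree_finset_prod _ _).trans ?_
  calc ∑ h : G, (polyAct (((h : Matrix.GeneralLinearGroup (Fin n) F)⁻¹ :
      Matrix.GeneralLinearGroup (Fin n) F) : Matrix (Fin n) (Fin n) F) f).totalDegree
      ≤ ∑ _h : G, d := Finset.sum_le_sum fun h _ => (totalDegree_polyAct_le _ _).trans hf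
    _ = Nat.card G * d := by
        rw [Finset.sum_const, smul_eq_mul, Finset.card_univ, Nat.card_eq_fintype_card]
lemma totalDegree_fOrb_le {F : Type*} [Field F] [Fintype F] [DecidableEq F] {n : ℕ}
    (W : Set (Fin n → F)) : (fOrb W).totalDegree ≤ n * (Fintype.card F - 1) := by
  rw [fOrb]
  exact totalDegree_finsetSum_le fun w _ => totalDegree_fW_le w

/-- for a matrix `(a i j)` with pairwise different columns, the invariants
`t_i = a_{i1} n_1 + ⋯ + a_{ik} n_k` (`1 ≤ i ≤ γ = ⌈log_q k⌉`) form a minimal separating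
set for `F_q[V]^G` consisting of elements of degree at most `|G|·n·(q-1)`. -/
theorem stmt1 {q n k : ℕ} (F : Type*) [Field F] [Fintype F] [DecidableEq F]
    (hq : Fintype.card F = q)
    (G : Subgroup (Matrix.GeneralLinearGroup (Fin n) F))
    (W : Fin k → Set (Fin n → F))
    (horb : ∀ j, ∃ w : Fin n → F, W j =
      {u | ∃ g ∈ G, (g : Matrix (Fin n) (Fin n) F).mulVec w = u})
    (hcover : ∀ v : Fin n → F, ∃ j, v ∈ W j)
    (hdisj : ∀ j₁ j₂, j₁ ≠ j₂ → Disjoint (W j₁) (W j₂))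
    (a : Fin (Nat.clog q k) → Fin k → F)
    (hcols : ∀ j₁ j₂ : Fin k, j₁ ≠ j₂ → ∃ i, a i j₁ ≠ a i j₂) :
    let t : Fin (Nat.clog q k) → MvPolynomial (Fin n) F :=
      fun i => ∑ j, C (a i j) * nInvPoly G (fOrb (W j))
    -- the t_i are invariants
    (∀ i, ∀ g ∈ G,
      polyAct ((g⁻¹ : Matrix.GeneralLinearGroup (Fin n) F) : Matrix (Fin n) (Fin n) F)
        (t i) = t i) ∧
    -- the t_i form a separating set
    (∀ u v : Fin n → F,
      (¬ ∃ g ∈ G, (g : Matrix (Fin n) (Fin n) F).mulVec u = v) →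
      ∃ i, eval u (t i) ≠ eval v (t i)) ∧
    -- degree bound |G|·n·(q-1)
    (∀ i, (t i).totalDegree ≤ Nat.card G * n * (q - 1)) ∧
    -- minimality: no separating set of invariants has fewer than γ elements
    (∀ (r : ℕ) (l : Fin r → MvPolynomial (Fin n) F),
      (∀ i, ∀ g ∈ G,
        polyAct ((g⁻¹ : Matrix.GeneralLinearGroup (Fin n) F) : Matrix (Fin n) (Fin n) F)
          (l i) = l i) →
      (∀ u v : Fin n → F,
        (¬ ∃ g ∈ G, (g : Matrix (Fin n) (Fin n) F).mulVec u = v) →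
        ∃ i, eval u (l i) ≠ eval v (l i)) →
      Nat.clog q k ≤ r) := by
  intro t
  have hq2 : 1 < q := hq ▸ Fintype.one_lt_card
  have heval : ∀ (u : Fin n → F) (j₀ : Fin k), u ∈ W j₀ → ∀ i,
      eval u (t i) = a i j₀ := by
    intro u j₀ hu i
    show eval u (∑ j, C (a i j) * nInvPoly G (fOrb (W j))) = a i j₀
    rw [map_sum, Finset.sum_eq_single j₀]
    · obtain ⟨w, hw⟩ := horb j₀
      rw [eval_mul, eval_C, (eval_nInvPoly_orbit_aux G (W j₀) w hw u).1 hu, mul_one]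
    · intro j _ hj
      obtain ⟨w, hw⟩ := horb j
      have hnot : u ∉ W j := fun h => Set.disjoint_left.mp (hdisj j j₀ hj) h hu
      rw [eval_mul, (eval_nInvPoly_orbit_aux G (W j) w hw u).2 hnot, mul_zero]
    · intro h; exact absurd (Finset.mem_univ j₀) h
  refine ⟨?_, ?_, ?_, ?_⟩
  · intro i g hg
    show polyAct _ (∑ j, C (a i j) * nInvPoly G (fOrb (W j))) = _
    rw [polyAct_sum]
    apply Finset.sum_congr rfl
    intro j _
    rw [polyAct_C_mul, nInvPoly_invariant G _ g hg]
  · intro u v hnrel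
    obtain ⟨j₁, hj₁⟩ := hcover u
    obtain ⟨j₂, hj₂⟩ := hcover v
    have hne : j₁ ≠ j₂ := by
      rintro rfl
      obtain ⟨w, hw⟩ := horb j₁
      rw [hw] at hj₁ hj₂
      obtain ⟨g₁, hg₁, rfl⟩ := hj₁
      obtain ⟨g₂, hg₂, rfl⟩ := hj₂
      refine hnrel ⟨g₂ * g₁⁻¹, mul_mem hg₂ (inv_mem hg₁), ?_⟩
      rw [Units.val_mul, ← Matrix.mulVec_mulVec]
      have := inv_mulVec_mulVec g₁⁻¹ w
      rw [inv_inv] at this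
      rw [this]
    obtain ⟨i, hi⟩ := hcols j₁ j₂ hne
    exact ⟨i, by rw [heval u j₁ hj₁ i, heval v j₂ hj₂ i]; exact hi⟩
  · intro i
    show (∑ j, C (a i j) * nInvPoly G (fOrb (W j))).totalDegree ≤ _
    apply totalDegree_finsetSum_le
    intro j _
    refine (totalDegree_mul _ _).trans ?_
    rw [totalDegree_C, zero_add]
    calc (nInvPoly G (fOrb (W j))).totalDegree
        ≤ Nat.card G * (n * (Fintype.card F - 1)) :=
          totalDegree_nInvPoly_le G (fOrb (W j)) (totalDegree_fOrb_le (W j))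
      _ = Nat.card G * n * (q - 1) := by rw [hq, mul_assoc]
  · intro r l _ hsep
    classical
    have hrep : ∀ j, ∃ u, u ∈ W j := by
      intro j
      obtain ⟨w, hw⟩ := horb j
      exact ⟨w, by rw [hw]; exact ⟨1, one_mem G, by simp⟩⟩
    choose rep hrepmem using hrep
    have hinj : Function.Injective (fun j : Fin k => fun i : Fin r => eval (rep j) (l i)) := by
      intro j₁ j₂ hjj
      by_contra hne
      have hnrel : ¬ ∃ g ∈ G, (g : Matrix (Fin n) (Fin n) F).mulVec (rep j₁) = rep j₂ := by
        rintro ⟨g, hg, hgv⟩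
        obtain ⟨w, hw⟩ := horb j₁
        have h1 : rep j₂ ∈ W j₁ := by
          rw [hw]
          exact hgv ▸ orbit_smul_mem G w g hg (rep j₁) (hw ▸ hrepmem j₁)
        exact Set.disjoint_left.mp (hdisj j₁ j₂ hne) h1 (hrepmem j₂)
      obtain ⟨i, hi⟩ := hsep _ _ hnrel
      exact hi (congrFun hjj i)
    have hcard : k ≤ q ^ r := by
      have h := Fintype.card_le_of_injective _ hinj
      simpa [hq, Fintype.card_fun] using h
    exact (Nat.clog_le_iff_le_pow hq2).mpr hcard
end

section
/- If G is a subgroup of the group G_n of monomial matrices, then f_1, ..., f_k are G-invariant and form a separating set for F_q[V]^G. -/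
open MvPolynomial
open scoped Classical

section aux
variable {F : Type*} [Field F] [Fintype F] [DecidableEq F] {n : ℕ}

lemma prod_shift (t : F) :
    ∏ a ∈ Finset.univ \ {t}, (t - a) = ∏ c ∈ Finset.univ \ {(0:F)}, c := by
  apply Finset.prod_nbij' (fun a => t - a) (fun c => t - c) <;>
    intros <;> simp_all [sub_sub_cancel, sub_eq_zero] <;> tauto

lemma Kconst_ne_zero : ((-1)^n * (∏ c ∈ Finset.univ \ {(0:F)}, c)^n : F) ≠ 0 := by
  apply mul_ne_zero (pow_ne_zero _ (by norm_num))
  apply pow_ne_zero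
  apply Finset.prod_ne_zero_iff.mpr
  intro c hc
  simpa using (Finset.mem_sdiff.mp hc).2

lemma fW_eval (w v : Fin n → F) :
    eval v (fW w) = if v = w then ((-1)^n * (∏ c ∈ Finset.univ \ {(0:F)}, c)^n : F) else 0 := by
  unfold fW
  simp only [map_mul, map_pow, map_neg, map_one, map_prod, map_sub, eval_X, eval_C]
  split_ifs with h
  · subst h
    rw [Finset.prod_congr rfl fun i _ => prod_shift (v i), Finset.prod_const,
      Finset.card_univ, Fintype.card_fin]
  · push_neg at h
    obtain ⟨i, hi⟩ := Function.ne_iff.mp h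
    rw [Finset.prod_eq_zero (Finset.mem_univ i)
      (Finset.prod_eq_zero (by simp [hi]) (sub_self (v i)))]
    ring

lemma fOrb_eval (W : Set (Fin n → F)) (v : Fin n → F) :
    eval v (fOrb W) = if v ∈ W then ((-1)^n * (∏ c ∈ Finset.univ \ {(0:F)}, c)^n : F) else 0 := by
  classical
  unfold fOrb
  rw [map_sum, Finset.sum_congr rfl fun w _ => fW_eval w v, Finset.sum_ite_eq]
  simp only [Set.Finite.mem_toFinset]

end aux

section mono
variable {F : Type*} [Field F] [Fintype F] [DecidableEq F] {n : ℕ}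

lemma polyAct_fW {M : Matrix (Fin n) (Fin n) F} (hM : IsMonomialMatrix M)
    (v : Fin n → F) : polyAct M (fW (M.mulVec v)) = fW v := by
  obtain ⟨h1, h2⟩ := hM
  choose σ hσ hσu using h1
  have hσinj : Function.Injective σ := by
    intro i i' h
    obtain ⟨r, -, hr⟩ := h2 (σ i)
    rw [hr i (hσ i), hr i' (h ▸ hσ i')]
  have hσbij : Function.Bijective σ := (Finite.injective_iff_bijective).mp hσinj
  have hrow : ∀ i j, j ≠ σ i → M i j = 0 := by
    intro i j hj
    by_contra h
    exact hj (hσu i j h)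
  have hsub : ∀ i, (∑ j, (C (M i j) * X j : MvPolynomial (Fin n) F)) = C (M i (σ i)) * X (σ i) := by
    intro i
    rw [Finset.sum_eq_single (σ i)]
    · intro j _ hj; rw [hrow i j hj]; simp
    · intro h; exact absurd (Finset.mem_univ _) h
  have hmv : ∀ i, M.mulVec v i = M i (σ i) * v (σ i) := by
    intro i
    rw [Matrix.mulVec, dotProduct, Finset.sum_eq_single (σ i)]
    · intro j _ hj; rw [hrow i j hj]; simp
    · intro h; exact absurd (Finset.mem_univ _) h
  unfold polyAct fW
  simp only [map_mul, map_pow, map_neg, map_one, map_prod, map_sub, aeval_X, aeval_C, hsub, algebraMap_eq]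
  congr 1
  -- reindex the outer product of fW v by σ
  rw [← Function.Bijective.prod_comp hσbij
    (fun j => ∏ a ∈ Finset.univ \ {v j}, ((X j : MvPolynomial (Fin n) F) - C a))]
  apply Finset.prod_congr rfl
  intro i _
  -- fixed i : ∏ a ∈ univ \ {M.mulVec v i}, (C (M i (σ i)) * X (σ i) - C a)
  --        = ∏ a ∈ univ \ {v (σ i)}, (X (σ i) - C a)
  set t := M i (σ i) with ht
  have htne : t ≠ 0 := hσ i
  have key : ∀ a : F, (C t * X (σ i) - C a : MvPolynomial (Fin n) F)
      = C t * (X (σ i) - C (a * t⁻¹)) := by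
    intro a
    rw [mul_sub, ← map_mul, mul_comm a, ← mul_assoc, mul_inv_cancel₀ htne, one_mul]
  rw [Finset.prod_congr rfl fun a _ => key a, Finset.prod_mul_distrib, Finset.prod_const]
  have hcard : (Finset.univ \ {M.mulVec v i} : Finset F).card = Fintype.card F - 1 := by
    rw [Finset.card_sdiff_of_subset (by simp)]
    simp
  rw [hcard, ← map_pow, FiniteField.pow_card_sub_one_eq_one t htne, map_one, one_mul]
  -- now reindex a ↦ a * t⁻¹
  apply Finset.prod_nbij' (fun a => a * t⁻¹) (fun b => b * t)
  · intro a ha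
    simp only [Finset.mem_sdiff, Finset.mem_univ, Finset.mem_singleton, true_and,
      hmv i] at ha ⊢
    intro h
    apply ha
    rw [← h]
    field_simp
    rw [ht]
  · intro b hb
    simp only [Finset.mem_sdiff, Finset.mem_univ, Finset.mem_singleton, true_and,
      hmv i] at hb ⊢
    intro h
    apply hb
    rw [mul_comm] at h
    exact (mul_left_cancel₀ htne h)
  · intro a _; field_simp
  · intro b _; field_simp
  · intro a _; rfl
end mono

section main
variable {F : Type*} [Field F] [Fintype F] [DecidableEq F] {n : ℕ}

lemma coe_inv_mulVec (g : Matrix.GeneralLinearGroup (Fin n) F) (w : Fin n → F) :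
    ((g⁻¹ : Matrix.GeneralLinearGroup (Fin n) F) : Matrix (Fin n) (Fin n) F).mulVec
      ((g : Matrix (Fin n) (Fin n) F).mulVec w) = w := by
  rw [Matrix.mulVec_mulVec]
  have : ((g⁻¹ : Matrix.GeneralLinearGroup (Fin n) F) : Matrix (Fin n) (Fin n) F) *
      (g : Matrix (Fin n) (Fin n) F) = 1 := by
    rw [← Units.val_mul, inv_mul_cancel, Units.val_one]
  rw [this, Matrix.one_mulVec]


end main

/-- if `G` consists of monomial matrices, then `f_1, …, f_k` are
`G`-invariant and form a separating set for `F_q[V]^G`. -/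
theorem stmt5 {q n k : ℕ} (F : Type*) [Field F] [Fintype F] [DecidableEq F]
    (hq : Fintype.card F = q)
    (G : Subgroup (Matrix.GeneralLinearGroup (Fin n) F))
    (W : Fin k → Set (Fin n → F))
    (horb : ∀ j, ∃ w : Fin n → F, W j =
      {u | ∃ g ∈ G, (g : Matrix (Fin n) (Fin n) F).mulVec w = u})
    (hcover : ∀ v : Fin n → F, ∃ j, v ∈ W j)
    (hdisj : ∀ j₁ j₂, j₁ ≠ j₂ → Disjoint (W j₁) (W j₂))
    (hmono : ∀ g ∈ G, IsMonomialMatrix ((g : Matrix.GeneralLinearGroup (Fin n) F) :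
        Matrix (Fin n) (Fin n) F)) :
    -- the f_j are invariants
    (∀ j, ∀ g ∈ G,
      polyAct ((g⁻¹ : Matrix.GeneralLinearGroup (Fin n) F) : Matrix (Fin n) (Fin n) F)
        (fOrb (W j)) = fOrb (W j)) ∧
    -- and they form a separating set
    (∀ u v : Fin n → F,
      (¬ ∃ g ∈ G, (g : Matrix (Fin n) (Fin n) F).mulVec u = v) →
      ∃ j, eval u (fOrb (W j)) ≠ eval v (fOrb (W j))) := by
  -- closure of each orbit under the action
  have hclosed : ∀ j (g : Matrix.GeneralLinearGroup (Fin n) F), g ∈ G →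
      ∀ w ∈ W j, (g : Matrix (Fin n) (Fin n) F).mulVec w ∈ W j := by
    intro j g hg w hw
    obtain ⟨w₀, hW⟩ := horb j
    rw [hW] at hw ⊢
    obtain ⟨h, hh, hhw⟩ := hw
    exact ⟨g * h, mul_mem hg hh, by rw [Units.val_mul, ← Matrix.mulVec_mulVec, hhw]⟩
  constructor
  · intro j g hg
    have hMinv : IsMonomialMatrix ((g⁻¹ : Matrix.GeneralLinearGroup (Fin n) F) :
        Matrix (Fin n) (Fin n) F) := hmono g⁻¹ (inv_mem hg)
    unfold fOrb
    rw [polyAct, map_sum]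
    apply Finset.sum_nbij' (fun w => (g : Matrix (Fin n) (Fin n) F).mulVec w)
      (fun u => ((g⁻¹ : Matrix.GeneralLinearGroup (Fin n) F) :
        Matrix (Fin n) (Fin n) F).mulVec u)
    · intro w hw
      rw [Set.Finite.mem_toFinset] at hw ⊢
      exact hclosed j g hg w hw
    · intro u hu
      rw [Set.Finite.mem_toFinset] at hu ⊢
      exact hclosed j g⁻¹ (inv_mem hg) u hu
    · intro w _
      exact coe_inv_mulVec g w
    · intro u _
      simpa using coe_inv_mulVec g⁻¹ u
    · intro w hw
      show polyAct _ (fW w) = fW _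
      conv_lhs => rw [← coe_inv_mulVec g w]
      exact polyAct_fW hMinv _
  · intro u v huv
    obtain ⟨j, hj⟩ := hcover u
    refine ⟨j, ?_⟩
    have hvnot : v ∉ W j := by
      intro hv
      obtain ⟨w₀, hW⟩ := horb j
      rw [hW] at hj hv
      obtain ⟨h, hh, hhw⟩ := hj
      obtain ⟨g', hg', hg'w⟩ := hv
      refine huv ⟨g' * h⁻¹, mul_mem hg' (inv_mem hh), ?_⟩
      rw [Units.val_mul, ← Matrix.mulVec_mulVec, ← hhw, coe_inv_mulVec h w₀, hg'w]
    rw [fOrb_eval, fOrb_eval, if_pos hj, if_neg hvnot]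
    exact Kconst_ne_zero
end

section
/- Suppose G is a subgroup of the group G_n of monomial matrices. Let (a_{ij}) ∈ F^{γ×k} be a matrix whose columns are pairwise different and define t'_i = a_{i1} f_1 + ... + a_{ik} f_k for 1 ≤ i ≤ γ. Then t'_1, ..., t'_γ form a minimal separating set for F_q[V]^G consisting of invariants of degree at most n(q−1). -/
open MvPolynomial

namespace Stmt7Aux

open Finset

variable {F : Type*} [Field F] [Fintype F] [DecidableEq F] {n : ℕ}

lemma prod_nonzero : (∏ b ∈ (univ \ {0} : Finset F), b) = -1 := by
  have h1 : ∏ b ∈ (univ \ {0} : Finset F), b = ∏ x : Fˣ, (x : F) := by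
    apply Finset.prod_bij' (fun b hb => Units.mk0 b (by simpa using hb)) (fun x _ => (x : F))
      <;> simp
  have h2 : ∏ x : Fˣ, (x : F) = ((∏ x : Fˣ, x : Fˣ) : F) := (map_prod (Units.coeHom F) _ _).symm
  rw [h1, h2, FiniteField.prod_univ_units_id_eq_neg_one]
  simp

lemma eval_fW (w v : Fin n → F) : eval v (fW w) = if v = w then 1 else 0 := by
  rw [fW]
  simp only [map_mul, map_pow, map_neg, map_one, map_prod, eval_sub, eval_X, eval_C]
  by_cases h : v = w
  · subst h
    have h2 : ∀ i : Fin n, ∏ a ∈ (univ \ {v i} : Finset F), (v i - a) = -1 := by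
      intro i
      rw [← prod_nonzero (F := F)]
      apply Finset.prod_bij' (fun a ha => v i - a) (fun b hb => v i - b) <;>
        intros <;> simp_all [sub_eq_zero, eq_comm, sub_sub_cancel, eq_sub_iff_add_eq,
          left_eq_add]
    simp only [h2, if_pos rfl, prod_const, card_univ, Fintype.card_fin]
    rw [← mul_pow]; simp
  · rw [if_neg h]
    obtain ⟨i, hi⟩ : ∃ i, v i ≠ w i := Function.ne_iff.mp h
    have : ∏ a ∈ (univ \ {w i} : Finset F), (v i - a) = 0 :=
      Finset.prod_eq_zero (i := v i) (by simpa using hi) (by simp)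
    rw [Finset.prod_eq_zero (Finset.mem_univ i) this, mul_zero]

open Classical in
lemma eval_fOrb (W : Set (Fin n → F)) (v : Fin n → F) :
    eval v (fOrb W) = if v ∈ W then 1 else 0 := by
  classical
  rw [fOrb, map_sum]
  have : ∀ w ∈ (Set.toFinite W).toFinset, eval v (fW w) = if v = w then (1:F) else 0 :=
    fun w _ => eval_fW w v
  rw [Finset.sum_congr rfl this, Finset.sum_ite_eq]
  simp [Set.Finite.mem_toFinset]

lemma polyAct_fW {M : Matrix (Fin n) (Fin n) F} (hM : IsMonomialMatrix M) (w : Fin n → F) :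
    ∃ w', polyAct M (fW w) = fW w' ∧ M.mulVec w' = w := by
  classical
  set σ : Fin n → Fin n := fun i => (hM.1 i).choose with hσ
  have hc : ∀ i, M i (σ i) ≠ 0 := fun i => (hM.1 i).choose_spec.1
  have huniq : ∀ i j, M i j ≠ 0 → j = σ i := fun i j h => (hM.1 i).choose_spec.2 j h
  have hinj : Function.Injective σ := by
    intro i₁ i₂ h
    exact ((hM.2 (σ i₁)).choose_spec.2 i₁ (hc i₁)).trans
      (((hM.2 (σ i₁)).choose_spec.2 i₂ (by rw [h]; exact hc i₂))).symm
  set e : Fin n ≃ Fin n := Equiv.ofBijective σ (Finite.injective_iff_bijective.mp hinj) with he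
  set c : Fin n → F := fun i => M i (σ i) with hcdef
  refine ⟨fun j => w (e.symm j) * (c (e.symm j))⁻¹, ?_, ?_⟩
  · have haX : ∀ i, aeval (fun i => ∑ j, C (M i j) * X j) (X i : MvPolynomial (Fin n) F)
        = C (c i) * X (σ i) := by
      intro i
      rw [aeval_X]
      exact Finset.sum_eq_single (σ i) (fun j _ hj => by
        have : M i j = 0 := by_contra fun h => hj (huniq i j h)
        simp [this]) (by simp)
    rw [polyAct, fW, fW]
    rw [map_mul, map_pow, map_neg, map_one, map_prod]
    congr 1
    have key : ∀ i, (aeval fun i => ∑ j, C (M i j) * X j)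
        (∏ a ∈ (univ \ {w i} : Finset F), (X i - C a))
        = ∏ a ∈ (univ \ {w i * (c i)⁻¹} : Finset F), (X (σ i) - C a) := by
      intro i
      rw [map_prod]
      have step1 : ∀ a : F, (aeval fun i => ∑ j, C (M i j) * X j)
          ((X i : MvPolynomial (Fin n) F) - C a) = C (c i) * (X (σ i) - C (a * (c i)⁻¹)) := by
        intro a
        rw [map_sub, haX, aeval_C]
        rw [mul_sub, ← C_mul]
        rw [mul_comm (a) ((c i)⁻¹), ← mul_assoc, mul_inv_cancel₀ (hc i), one_mul]
        rfl
      rw [Finset.prod_congr rfl (fun a _ => step1 a), Finset.prod_mul_distrib,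
        Finset.prod_const, ← C_pow]
      have hcard : (univ \ {w i} : Finset F).card = Fintype.card F - 1 := by
        rw [Finset.card_sdiff_of_subset (by simp)]; simp
      rw [hcard, FiniteField.pow_card_sub_one_eq_one _ (hc i), map_one, one_mul]
      apply Finset.prod_bij' (fun a _ => a * (c i)⁻¹) (fun b _ => b * c i)
      · intro a ha
        simp only [mem_sdiff, mem_univ, true_and, mem_singleton] at ha ⊢
        exact fun h => ha (mul_right_cancel₀ (inv_ne_zero (hc i)) h)
      · intro b hb
        simp only [mem_sdiff, mem_univ, true_and, mem_singleton] at hb ⊢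
        intro h
        exact hb ((mul_inv_cancel_right₀ (hc i) b).symm.trans (by rw [h]))
      · intro a _; exact inv_mul_cancel_right₀ (hc i) a
      · intro b _; exact mul_inv_cancel_right₀ (hc i) b
      · intro a _; rfl
    rw [Finset.prod_congr rfl (fun i _ => key i)]
    have : ∀ i, (∏ a ∈ (univ \ {w i * (c i)⁻¹} : Finset F), (X (σ i) - C a))
        = (fun j => ∏ a ∈ (univ \ {w (e.symm j) * (c (e.symm j))⁻¹} : Finset F),
            ((X j : MvPolynomial (Fin n) F) - C a)) (e i) := by
      intro i
      simp only [Equiv.symm_apply_apply]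
      rfl
    rw [Finset.prod_congr rfl (fun i _ => this i)]
    exact Equiv.prod_comp e (fun j => ∏ a ∈ (univ \ {w (e.symm j) * (c (e.symm j))⁻¹} : Finset F),
      ((X j : MvPolynomial (Fin n) F) - C a))
  · funext i
    rw [Matrix.mulVec]
    show (∑ j, M i j * (w (e.symm j) * (c (e.symm j))⁻¹)) = w i
    rw [Finset.sum_eq_single (σ i) (fun j _ hj => by
      have : M i j = 0 := by_contra fun h => hj (huniq i j h)
      simp [this]) (by simp)]
    have h1 : e.symm (σ i) = i := e.symm_apply_apply i
    rw [h1, mul_comm (M i (σ i)), mul_assoc, inv_mul_cancel₀ (hc i), mul_one]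

lemma totalDegree_fW (w : Fin n → F) :
    (fW w).totalDegree ≤ n * (Fintype.card F - 1) := by
  rw [fW]
  calc ((-1:MvPolynomial (Fin n) F) ^ n * ∏ i, ∏ a ∈ (univ \ {w i}), (X i - C a)).totalDegree
      ≤ ((-1:MvPolynomial (Fin n) F) ^ n).totalDegree
        + (∏ i, ∏ a ∈ (univ \ {w i} : Finset F), ((X i : MvPolynomial (Fin n) F) - C a)).totalDegree :=
        totalDegree_mul _ _
    _ ≤ 0 + ∑ i, (∏ a ∈ (univ \ {w i} : Finset F), ((X i : MvPolynomial (Fin n) F) - C a)).totalDegree := by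
        have h1 : ((-1:MvPolynomial (Fin n) F) ^ n) = C ((-1:F)^n) := by
          rw [map_pow, map_neg, map_one]
        rw [h1, totalDegree_C]
        exact Nat.add_le_add_left (totalDegree_finset_prod _ _) 0
    _ ≤ ∑ i : Fin n, (Fintype.card F - 1) := by
        rw [zero_add]
        apply Finset.sum_le_sum
        intro i _
        calc (∏ a ∈ (univ \ {w i} : Finset F), ((X i : MvPolynomial (Fin n) F) - C a)).totalDegree
            ≤ ∑ a ∈ (univ \ {w i} : Finset F), ((X i : MvPolynomial (Fin n) F) - C a).totalDegree :=
            totalDegree_finset_prod _ _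
          _ ≤ ∑ a ∈ (univ \ {w i} : Finset F), 1 := by
              apply Finset.sum_le_sum
              intro a _
              calc ((X i : MvPolynomial (Fin n) F) - C a).totalDegree
                  = ((X i : MvPolynomial (Fin n) F) + C (-a)).totalDegree := by
                    rw [sub_eq_add_neg, map_neg]
                _ ≤ max (X i : MvPolynomial (Fin n) F).totalDegree (C (-a) : MvPolynomial (Fin n) F).totalDegree :=
                    totalDegree_add _ _
                _ ≤ 1 := by rw [totalDegree_X, totalDegree_C]; simp
          _ = Fintype.card F - 1 := by
              rw [Finset.sum_const, smul_eq_mul, mul_one, Finset.card_sdiff_of_subset (by simp)]; simp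
    _ = n * (Fintype.card F - 1) := by simp [Finset.sum_const, mul_comm]

end Stmt7Aux

/-- if `G` consists of monomial matrices and `(a i j)` has pairwise
different columns, then `t'_i = a_{i1} f_1 + ⋯ + a_{ik} f_k` (`1 ≤ i ≤ γ`) form a
minimal separating set for `F_q[V]^G` consisting of invariants of degree ≤ `n(q-1)`. -/
theorem stmt7 {q n k : ℕ} (F : Type*) [Field F] [Fintype F] [DecidableEq F]
    (hq : Fintype.card F = q)
    (G : Subgroup (Matrix.GeneralLinearGroup (Fin n) F))
    (W : Fin k → Set (Fin n → F))
    (horb : ∀ j, ∃ w : Fin n → F, W j =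
      {u | ∃ g ∈ G, (g : Matrix (Fin n) (Fin n) F).mulVec w = u})
    (hcover : ∀ v : Fin n → F, ∃ j, v ∈ W j)
    (hdisj : ∀ j₁ j₂, j₁ ≠ j₂ → Disjoint (W j₁) (W j₂))
    (hmono : ∀ g ∈ G, IsMonomialMatrix ((g : Matrix.GeneralLinearGroup (Fin n) F) :
        Matrix (Fin n) (Fin n) F))
    (a : Fin (Nat.clog q k) → Fin k → F)
    (hcols : ∀ j₁ j₂ : Fin k, j₁ ≠ j₂ → ∃ i, a i j₁ ≠ a i j₂) :
    let t' : Fin (Nat.clog q k) → MvPolynomial (Fin n) F :=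
      fun i => ∑ j, C (a i j) * fOrb (W j)
    -- the t'_i are invariants
    (∀ i, ∀ g ∈ G,
      polyAct ((g⁻¹ : Matrix.GeneralLinearGroup (Fin n) F) : Matrix (Fin n) (Fin n) F)
        (t' i) = t' i) ∧
    -- the t'_i form a separating set
    (∀ u v : Fin n → F,
      (¬ ∃ g ∈ G, (g : Matrix (Fin n) (Fin n) F).mulVec u = v) →
      ∃ i, eval u (t' i) ≠ eval v (t' i)) ∧
    -- degree bound n(q-1)
    (∀ i, (t' i).totalDegree ≤ n * (q - 1)) ∧
    -- minimality: no separating set of invariants has fewer than γ elements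
    (∀ (r : ℕ) (l : Fin r → MvPolynomial (Fin n) F),
      (∀ i, ∀ g ∈ G,
        polyAct ((g⁻¹ : Matrix.GeneralLinearGroup (Fin n) F) : Matrix (Fin n) (Fin n) F)
          (l i) = l i) →
      (∀ u v : Fin n → F,
        (¬ ∃ g ∈ G, (g : Matrix (Fin n) (Fin n) F).mulVec u = v) →
        ∃ i, eval u (l i) ≠ eval v (l i)) →
      Nat.clog q k ≤ r) := by
    classical
  intro t'
  have ht' : ∀ i, t' i = ∑ j, C (a i j) * fOrb (W j) := fun i => rfl
  -- orbit closure under the action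
  have hval : ∀ g ∈ G, ∀ (j : Fin k) (u : Fin n → F),
      u ∈ W j → (g : Matrix (Fin n) (Fin n) F).mulVec u ∈ W j := by
    intro g hg j u hu
    obtain ⟨w0, hw0⟩ := horb j
    rw [hw0] at hu ⊢
    obtain ⟨h, hh, rfl⟩ := hu
    exact ⟨g * h, mul_mem hg hh, by rw [Matrix.mulVec_mulVec, Units.val_mul]⟩
  -- two points of the same W j are related by an element of G
  have hsame : ∀ (j : Fin k) (u v : Fin n → F), u ∈ W j → v ∈ W j →
      ∃ g ∈ G, (g : Matrix (Fin n) (Fin n) F).mulVec u = v := by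
    intro j u v hu hv
    obtain ⟨w0, hw0⟩ := horb j
    rw [hw0] at hu hv
    obtain ⟨g₁, hg₁, rfl⟩ := hu
    obtain ⟨g₂, hg₂, rfl⟩ := hv
    refine ⟨g₂ * g₁⁻¹, mul_mem hg₂ (inv_mem hg₁), ?_⟩
    rw [Matrix.mulVec_mulVec, ← Units.val_mul, mul_assoc, inv_mul_cancel, mul_one]
  -- evaluating t' at a point of W j₀ gives a i j₀
  have heval : ∀ (i : Fin (Nat.clog q k)) (u : Fin n → F) (j₀ : Fin k), u ∈ W j₀ →
      eval u (t' i) = a i j₀ := by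
    intro i u j₀ hu
    rw [ht', map_sum]
    rw [Finset.sum_eq_single j₀ (fun j _ hj => ?_) (by simp)]
    · rw [eval_mul, eval_C, Stmt7Aux.eval_fOrb, if_pos hu, mul_one]
    · rw [eval_mul, eval_C, Stmt7Aux.eval_fOrb, if_neg, mul_zero]
      exact fun h => (Set.disjoint_left.mp (hdisj j j₀ hj)) h hu
  -- invariance of each fOrb (W j)
  have hfOrb : ∀ g ∈ G, ∀ j : Fin k,
      polyAct ((g⁻¹ : Matrix.GeneralLinearGroup (Fin n) F) : Matrix (Fin n) (Fin n) F)
        (fOrb (W j)) = fOrb (W j) := by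
    intro g hg j
    have hMmono := hmono g⁻¹ (inv_mem hg)
    have cancel : ∀ x : Fin n → F, ((g : Matrix.GeneralLinearGroup (Fin n) F) :
        Matrix (Fin n) (Fin n) F).mulVec
        (((g⁻¹ : Matrix.GeneralLinearGroup (Fin n) F) :
          Matrix (Fin n) (Fin n) F).mulVec x) = x := fun x => by
      rw [Matrix.mulVec_mulVec, ← Units.val_mul, mul_inv_cancel, Units.val_one,
        Matrix.one_mulVec]
    have cancel' : ∀ x : Fin n → F, ((g⁻¹ : Matrix.GeneralLinearGroup (Fin n) F) :
        Matrix (Fin n) (Fin n) F).mulVec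
        (((g : Matrix.GeneralLinearGroup (Fin n) F) :
          Matrix (Fin n) (Fin n) F).mulVec x) = x := fun x => by
      rw [Matrix.mulVec_mulVec, ← Units.val_mul, inv_mul_cancel, Units.val_one,
        Matrix.one_mulVec]
    have hMinj : Function.Injective
        (((g⁻¹ : Matrix.GeneralLinearGroup (Fin n) F) :
          Matrix (Fin n) (Fin n) F).mulVec) := by
      intro x y h
      rw [← cancel x, h, cancel y]
    set T : (Fin n → F) → (Fin n → F) :=
      fun w => (Stmt7Aux.polyAct_fW hMmono w).choose with hT
    have hT1 : ∀ w, polyAct _ (fW w) = fW (T w) :=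
      fun w => (Stmt7Aux.polyAct_fW hMmono w).choose_spec.1
    have hT2 : ∀ w, (((g⁻¹ : Matrix.GeneralLinearGroup (Fin n) F) :
        Matrix (Fin n) (Fin n) F)).mulVec (T w) = w :=
      fun w => (Stmt7Aux.polyAct_fW hMmono w).choose_spec.2
    have hTval : ∀ w, T w = ((g : Matrix.GeneralLinearGroup (Fin n) F) :
        Matrix (Fin n) (Fin n) F).mulVec w := by
      intro w
      apply hMinj
      rw [hT2 w, cancel' w]
    rw [fOrb]
    simp only [polyAct, map_sum]
    have step : ∀ w ∈ (Set.toFinite (W j)).toFinset,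
        (aeval fun i => ∑ j', C (((g⁻¹ : Matrix.GeneralLinearGroup (Fin n) F) :
          Matrix (Fin n) (Fin n) F) i j') * X j') (fW w) = fW (T w) := fun w _ => hT1 w
    rw [Finset.sum_congr rfl step]
    apply Finset.sum_nbij' (i := T)
      (j := fun u => (((g⁻¹ : Matrix.GeneralLinearGroup (Fin n) F) :
        Matrix (Fin n) (Fin n) F)).mulVec u)
    · intro w hw
      rw [Set.Finite.mem_toFinset] at hw ⊢
      rw [hTval w]
      exact hval g hg j w hw
    · intro u hu
      rw [Set.Finite.mem_toFinset] at hu ⊢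
      exact hval g⁻¹ (inv_mem hg) j u hu
    · intro w hw
      exact hT2 w
    · intro u hu
      apply hMinj
      rw [hT2]
    · intro w hw
      rfl
  refine ⟨?_, ?_, ?_, ?_⟩
  · -- invariance
    intro i g hg
    rw [ht']
    simp only [polyAct, map_sum, map_mul, aeval_C, algebraMap_eq]
    have : ∀ j ∈ (Finset.univ : Finset (Fin k)),
        C (a i j) * (aeval fun i => ∑ j', C (((g⁻¹ : Matrix.GeneralLinearGroup (Fin n) F) :
          Matrix (Fin n) (Fin n) F) i j') * X j') (fOrb (W j)) = C (a i j) * fOrb (W j) := by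
      intro j _
      have := hfOrb g hg j
      simp only [polyAct] at this
      rw [this]
    rw [Finset.sum_congr rfl this]
  · -- separation
    intro u v hrel
    obtain ⟨ju, hju⟩ := hcover u
    obtain ⟨jv, hjv⟩ := hcover v
    have hne : ju ≠ jv := by
      rintro rfl
      exact hrel (hsame ju u v hju hjv)
    obtain ⟨i, hi⟩ := hcols ju jv hne
    exact ⟨i, by rw [heval i u ju hju, heval i v jv hjv]; exact hi⟩
  · -- degree bound
    intro i
    rw [ht']
    refine le_trans (totalDegree_finset_sum _ _) (Finset.sup_le fun j _ => ?_)
    calc (C (a i j) * fOrb (W j)).totalDegree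
        ≤ (C (a i j) : MvPolynomial (Fin n) F).totalDegree + (fOrb (W j)).totalDegree :=
          totalDegree_mul _ _
      _ = (fOrb (W j)).totalDegree := by rw [totalDegree_C, zero_add]
      _ ≤ n * (q - 1) := by
          rw [fOrb]
          refine le_trans (totalDegree_finset_sum _ _) (Finset.sup_le fun w _ => ?_)
          have := Stmt7Aux.totalDegree_fW w
          rwa [hq] at this
  · -- minimality
    intro r l _ hsep
    have hq2 : 1 < q := hq ▸ Fintype.one_lt_card
    set rep : Fin k → (Fin n → F) := fun j => (horb j).choose with hrep
    have hrepmem : ∀ j, rep j ∈ W j := by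
      intro j
      rw [(horb j).choose_spec]
      exact ⟨1, one_mem G, by rw [Units.val_one, Matrix.one_mulVec]⟩
    have hΦinj : Function.Injective (fun j (i : Fin r) => eval (rep j) (l i)) := by
      intro j₁ j₂ h
      by_contra hne
      have hnotrel : ¬ ∃ g ∈ G, (g : Matrix (Fin n) (Fin n) F).mulVec (rep j₁) = rep j₂ := by
        rintro ⟨g, hg, hgv⟩
        have h1 : rep j₂ ∈ W j₁ := hgv ▸ hval g hg j₁ (rep j₁) (hrepmem j₁)
        exact (Set.disjoint_left.mp (hdisj j₁ j₂ hne)) h1 (hrepmem j₂)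
      obtain ⟨i, hi⟩ := hsep (rep j₁) (rep j₂) hnotrel
      exact hi (congrFun h i)
    have hk : k ≤ q ^ r := by
      calc k = Fintype.card (Fin k) := (Fintype.card_fin k).symm
        _ ≤ Fintype.card (Fin r → F) := Fintype.card_le_of_injective _ hΦinj
        _ = q ^ r := by rw [Fintype.card_fun, hq, Fintype.card_fin]
    exact (Nat.clog_le_iff_le_pow hq2).mpr hk
end

section
/- For the action of S_4 on V = F_2^6 coming from its action on 2-element subsets of {1,2,3,4}, the subsets S_1 = {f_1, f_2, f_3, f_4, f_8} and S_2 = {f_1, f_2, f_3, f_5, f_8} are the only separating subsets of M = {f_1, ..., f_10} that are minimal with respect to inclusion. -/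
open MvPolynomial

/-- 2-element subsets of `Fin N`, encoded as ordered pairs `(i, j)` with `i < j`. -/
abbrev Edge (N : ℕ) := {p : Fin N × Fin N // p.1 < p.2}

/-- The action of a permutation `σ ∈ S_N` on edges: `σ·{i,j} = {σ(i),σ(j)}`. -/
def edgeMap {N : ℕ} (σ : Equiv.Perm (Fin N)) (e : Edge N) : Edge N :=
  ⟨(min (σ e.1.1) (σ e.1.2), max (σ e.1.1) (σ e.1.2)), by
    have h : σ e.1.1 ≠ σ e.1.2 := fun h => absurd (σ.injective h) (ne_of_lt e.2)
    exact min_lt_max.mpr h⟩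

/-- orbit sum `o(f)`: the sum over the (distinct elements of the) `S_N`-orbit of `f`. -/
noncomputable def orbitSum {N : ℕ} (f : MvPolynomial (Edge N) (ZMod 2)) :
    MvPolynomial (Edge N) (ZMod 2) :=
  letI : DecidableEq (MvPolynomial (Edge N) (ZMod 2)) := Classical.decEq _
  ∑ h ∈ Finset.image (fun σ : Equiv.Perm (Fin N) => rename (edgeMap σ) f) Finset.univ, h

/-- Two points of `V = F_2^(N choose 2)` lie in the same `S_N`-orbit. -/
def GraphSameOrbit {N : ℕ} (u v : Edge N → ZMod 2) : Prop :=
  ∃ σ : Equiv.Perm (Fin N), ∀ e, u (edgeMap σ e) = v e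

/-- A set of polynomials is separating if it separates any two points of `V`
lying in different `S_N`-orbits. -/
def IsSepGraph {N : ℕ} (S : Set (MvPolynomial (Edge N) (ZMod 2))) : Prop :=
  ∀ u v : Edge N → ZMod 2, ¬ GraphSameOrbit u v → ∃ f ∈ S, eval u f ≠ eval v f

namespace S4graphs

/- The six edges of the complete graph on `{1,2,3,4}` (0-indexed), ordered
x12, x13, x14, x23, x24, x34. -/
def e12 : Edge 4 := ⟨(0, 1), by decide⟩
def e13 : Edge 4 := ⟨(0, 2), by decide⟩
def e14 : Edge 4 := ⟨(0, 3), by decide⟩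
def e23 : Edge 4 := ⟨(1, 2), by decide⟩
def e24 : Edge 4 := ⟨(1, 3), by decide⟩
def e34 : Edge 4 := ⟨(2, 3), by decide⟩

noncomputable def f1 : MvPolynomial (Edge 4) (ZMod 2) := orbitSum (X e12)
noncomputable def f2 : MvPolynomial (Edge 4) (ZMod 2) := orbitSum (X e12 * X e13)
noncomputable def f3 : MvPolynomial (Edge 4) (ZMod 2) := orbitSum (X e12 * X e34)
noncomputable def f4 : MvPolynomial (Edge 4) (ZMod 2) := orbitSum (X e12 * X e13 * X e14)
noncomputable def f5 : MvPolynomial (Edge 4) (ZMod 2) := orbitSum (X e12 * X e13 * X e23)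
noncomputable def f6 : MvPolynomial (Edge 4) (ZMod 2) := orbitSum (X e12 * X e13 * X e24)
noncomputable def f7 : MvPolynomial (Edge 4) (ZMod 2) :=
  orbitSum (X e12 * X e13 * X e14 * X e24)
noncomputable def f8 : MvPolynomial (Edge 4) (ZMod 2) :=
  orbitSum (X e12 * X e13 * X e24 * X e34)
noncomputable def f9 : MvPolynomial (Edge 4) (ZMod 2) :=
  orbitSum (X e12 * X e13 * X e14 * X e23 * X e24)
noncomputable def f10 : MvPolynomial (Edge 4) (ZMod 2) :=
  X e12 * X e13 * X e14 * X e23 * X e24 * X e34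

/-- The minimal generating set `M = {f_1, …, f_10}` of `F_2[V]^{S_4}`. -/
noncomputable def M : Set (MvPolynomial (Edge 4) (ZMod 2)) :=
  {f1, f2, f3, f4, f5, f6, f7, f8, f9, f10}

/-! ### Auxiliary machinery -/

instance graphSameOrbitDecidable (u v : Edge 4 → ZMod 2) : Decidable (GraphSameOrbit u v) :=
  inferInstanceAs (Decidable (∃ σ : Equiv.Perm (Fin 4), ∀ e, u (edgeMap σ e) = v e))

lemma edgeMap_mul {N : ℕ} (σ τ : Equiv.Perm (Fin N)) (e : Edge N) :
    edgeMap σ (edgeMap τ e) = edgeMap (σ * τ) e := by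
  obtain ⟨⟨a, b⟩, hab⟩ := e
  apply Subtype.ext
  simp only [edgeMap, Equiv.Perm.mul_apply]
  rcases le_total (τ a) (τ b) with h | h
  · simp [min_eq_left h, max_eq_right h]
  · simp [min_eq_right h, max_eq_left h, min_comm, max_comm]

lemma edgeMap_one {N : ℕ} (e : Edge N) : edgeMap (1 : Equiv.Perm (Fin N)) e = e := by
  obtain ⟨⟨a, b⟩, hab⟩ := e
  apply Subtype.ext
  simp [edgeMap, min_eq_left hab.le, max_eq_right hab.le]

lemma edgeMap_inv_self {N : ℕ} (σ : Equiv.Perm (Fin N)) (e : Edge N) :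
    edgeMap σ⁻¹ (edgeMap σ e) = e := by
  rw [edgeMap_mul, inv_mul_cancel, edgeMap_one]

lemma edgeMap_self_inv {N : ℕ} (σ : Equiv.Perm (Fin N)) (e : Edge N) :
    edgeMap σ (edgeMap σ⁻¹ e) = e := by
  rw [edgeMap_mul, mul_inv_cancel, edgeMap_one]

lemma edgeMap_injective {N : ℕ} (σ : Equiv.Perm (Fin N)) : Function.Injective (edgeMap σ) :=
  fun a b h => by
    have := congrArg (edgeMap σ⁻¹) h
    rwa [edgeMap_inv_self, edgeMap_inv_self] at this

lemma sameOrbit_symm {u v : Edge 4 → ZMod 2} (h : GraphSameOrbit u v) : GraphSameOrbit v u := by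
  obtain ⟨σ, hσ⟩ := h
  exact ⟨σ⁻¹, fun e => by rw [← hσ (edgeMap σ⁻¹ e), edgeMap_self_inv]⟩

lemma sameOrbit_trans {u v w : Edge 4 → ZMod 2} (h1 : GraphSameOrbit u v)
    (h2 : GraphSameOrbit v w) : GraphSameOrbit u w := by
  obtain ⟨σ, hσ⟩ := h1
  obtain ⟨τ, hτ⟩ := h2
  exact ⟨σ * τ, fun e => by rw [← edgeMap_mul, hσ, hτ]⟩

/-! ### The ten orbit edge-sets and the computable evaluation function -/

def sIdx : Fin 10 → Finset (Edge 4) :=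
  ![{e12}, {e12, e13}, {e12, e34}, {e12, e13, e14}, {e12, e13, e23}, {e12, e13, e24},
    {e12, e13, e14, e24}, {e12, e13, e24, e34}, {e12, e13, e14, e23, e24},
    {e12, e13, e14, e23, e24, e34}]

def orb (s : Finset (Edge 4)) : Finset (Finset (Edge 4)) :=
  Finset.image (fun σ : Equiv.Perm (Fin 4) => s.image (edgeMap σ)) Finset.univ

def F (i : Fin 10) (u : Edge 4 → ZMod 2) : ZMod 2 := ∑ t ∈ orb (sIdx i), ∏ e ∈ t, u e

noncomputable def fIdx : Fin 10 → MvPolynomial (Edge 4) (ZMod 2) :=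
  ![f1, f2, f3, f4, f5, f6, f7, f8, f9, f10]

/-! ### Products of variables over finsets -/

lemma eval_ind_prod (t s : Finset (Edge 4)) :
    eval (fun e => if e ∈ s then (1 : ZMod 2) else 0) (∏ e ∈ t, (X e : MvPolynomial (Edge 4) (ZMod 2)))
      = if t ⊆ s then 1 else 0 := by
  rw [map_prod]
  simp only [eval_X]
  split_ifs with h
  · exact Finset.prod_eq_one fun e he => by simp [h he]
  · obtain ⟨e0, he0t, he0s⟩ := Finset.not_subset.mp h
    exact Finset.prod_eq_zero he0t (by simp [he0s])

lemma prodX_inj : ∀ t t' : Finset (Edge 4),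
    (∏ e ∈ t, (X e : MvPolynomial (Edge 4) (ZMod 2))) = ∏ e ∈ t', X e → t = t' := by
  intro t t' h
  have h1 := congrArg (eval (fun e => if e ∈ t' then (1 : ZMod 2) else 0)) h
  have h2 := congrArg (eval (fun e => if e ∈ t then (1 : ZMod 2) else 0)) h
  rw [eval_ind_prod, eval_ind_prod] at h1 h2
  apply Finset.Subset.antisymm
  · by_contra hsub
    simp [hsub, Finset.Subset.refl] at h1
  · by_contra hsub
    simp [hsub, Finset.Subset.refl] at h2

lemma rename_prodX (σ : Equiv.Perm (Fin 4)) (s : Finset (Edge 4)) :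
    rename (edgeMap σ) (∏ e ∈ s, (X e : MvPolynomial (Edge 4) (ZMod 2)))
      = ∏ e ∈ s.image (edgeMap σ), X e := by
  rw [map_prod, Finset.prod_image (fun a _ b _ h => edgeMap_injective σ h)]
  simp [rename_X]

lemma orbitSum_eq (s : Finset (Edge 4)) :
    orbitSum (∏ e ∈ s, (X e : MvPolynomial (Edge 4) (ZMod 2)))
      = ∑ t ∈ orb s, ∏ e ∈ t, X e := by
  letI : DecidableEq (MvPolynomial (Edge 4) (ZMod 2)) := Classical.decEq _
  rw [orbitSum]
  have himg : (Finset.image (fun σ : Equiv.Perm (Fin 4) =>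
        rename (edgeMap σ) (∏ e ∈ s, (X e : MvPolynomial (Edge 4) (ZMod 2)))) Finset.univ)
      = Finset.image (fun t => ∏ e ∈ t, X e) (orb s) := by
    rw [orb, Finset.image_image]
    exact Finset.image_congr fun σ _ => rename_prodX σ s
  rw [himg, Finset.sum_image fun t _ t' _ h => prodX_inj t t' h]

lemma eval_orbitSum (s : Finset (Edge 4)) (u : Edge 4 → ZMod 2) :
    eval u (orbitSum (∏ e ∈ s, (X e : MvPolynomial (Edge 4) (ZMod 2))))
      = ∑ t ∈ orb s, ∏ e ∈ t, u e := by
  rw [orbitSum_eq, map_sum]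
  exact Finset.sum_congr rfl fun t _ => by rw [map_prod]; simp

/-! ### Invariance of F on orbits -/

lemma orb_image (σ : Equiv.Perm (Fin 4)) (s : Finset (Edge 4)) :
    (orb s).image (fun t => t.image (edgeMap σ)) = orb s := by
  unfold orb
  rw [Finset.image_image]
  have h1 : ((fun t => Finset.image (edgeMap σ) t) ∘ fun τ : Equiv.Perm (Fin 4) =>
      s.image (edgeMap τ)) = fun τ : Equiv.Perm (Fin 4) => s.image (edgeMap (σ * τ)) := by
    funext τ
    simp only [Function.comp_apply, Finset.image_image]
    exact Finset.image_congr fun e _ => edgeMap_mul σ τ e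
  rw [h1]
  have h2 : (fun τ : Equiv.Perm (Fin 4) => s.image (edgeMap (σ * τ)))
      = (fun τ : Equiv.Perm (Fin 4) => s.image (edgeMap τ)) ∘ ⇑(Equiv.mulLeft σ) := rfl
  rw [h2, ← Finset.image_image, Finset.image_univ_equiv]

lemma F_invariant (i : Fin 10) {u v : Edge 4 → ZMod 2} (h : GraphSameOrbit u v) :
    F i u = F i v := by
  obtain ⟨σ, hσ⟩ := h
  unfold F
  have step1 : ∀ t : Finset (Edge 4), (∏ e ∈ t, v e) = ∏ e ∈ t.image (edgeMap σ), u e := by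
    intro t
    rw [Finset.prod_image (fun a _ b _ hh => edgeMap_injective σ hh)]
    exact Finset.prod_congr rfl fun e _ => (hσ e).symm
  rw [Finset.sum_congr rfl fun t _ => step1 t]
  conv_lhs => rw [← orb_image σ (sIdx i)]
  rw [Finset.sum_image fun t _ t' _ hh => Finset.image_injective (edgeMap_injective σ) hh]

/-! ### The value table -/

def tbl : Fin 10 → Fin 11 → ZMod 2 :=
  ![![0,1,0,0,1,1,1,0,0,1,0], ![0,0,0,1,1,1,0,1,0,0,0], ![0,0,1,0,0,0,1,1,0,0,1],
    ![0,0,0,0,1,0,0,1,0,0,0], ![0,0,0,0,0,1,0,1,0,0,0], ![0,0,0,0,0,0,1,0,0,0,0],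
    ![0,0,0,0,0,0,0,1,0,0,0], ![0,0,0,0,0,0,0,0,1,1,1], ![0,0,0,0,0,0,0,0,0,1,0],
    ![0,0,0,0,0,0,0,0,0,0,1]]

def repSet : Fin 11 → Finset (Edge 4) :=
  ![∅, {e12}, {e12, e34}, {e12, e13}, {e12, e13, e14}, {e12, e13, e23}, {e12, e13, e24},
    {e12, e13, e14, e24}, {e12, e13, e24, e34}, {e12, e13, e14, e23, e24}, Finset.univ]

def rep (k : Fin 11) : Edge 4 → ZMod 2 := fun e => if e ∈ repSet k then 1 else 0

set_option maxHeartbeats 4000000 in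
set_option maxRecDepth 100000 in
lemma tbl_eq : ∀ (i : Fin 10) (k : Fin 11), F i (rep k) = tbl i k := by decide

set_option maxHeartbeats 1000000 in
set_option maxRecDepth 10000 in
lemma rep_nequiv : ∀ k l : Fin 11, k ≠ l → ¬ GraphSameOrbit (rep k) (rep l) := by decide

set_option maxHeartbeats 8000000 in
set_option maxRecDepth 100000 in
lemma rep_covers : ∀ u : Edge 4 → ZMod 2, ∃ k, GraphSameOrbit u (rep k) := by decide

lemma tbl_rows : ∀ i j : Fin 10, i ≠ j → ∃ k, tbl i k ≠ tbl j k := by decide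

set_option maxRecDepth 10000 in
lemma orb_full : orb (sIdx 9) = {sIdx 9} := by decide

/-! ### Evaluation of the f's -/

lemma eval_f1 (u : Edge 4 → ZMod 2) : eval u f1 = F 0 u := by
  rw [f1, show (X e12 : MvPolynomial (Edge 4) (ZMod 2)) = ∏ e ∈ sIdx 0, X e from by
    rw [show sIdx 0 = {e12} from rfl, Finset.prod_singleton]]
  exact eval_orbitSum (sIdx 0) u

lemma eval_f2 (u : Edge 4 → ZMod 2) : eval u f2 = F 1 u := by
  rw [f2, show (X e12 * X e13 : MvPolynomial (Edge 4) (ZMod 2)) = ∏ e ∈ sIdx 1, X e from by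
    rw [show sIdx 1 = {e12, e13} from rfl, Finset.prod_insert (by decide),
      Finset.prod_singleton]]
  exact eval_orbitSum (sIdx 1) u

lemma eval_f3 (u : Edge 4 → ZMod 2) : eval u f3 = F 2 u := by
  rw [f3, show (X e12 * X e34 : MvPolynomial (Edge 4) (ZMod 2)) = ∏ e ∈ sIdx 2, X e from by
    rw [show sIdx 2 = {e12, e34} from rfl, Finset.prod_insert (by decide),
      Finset.prod_singleton]]
  exact eval_orbitSum (sIdx 2) u

lemma eval_f4 (u : Edge 4 → ZMod 2) : eval u f4 = F 3 u := by
  rw [f4, show (X e12 * X e13 * X e14 : MvPolynomial (Edge 4) (ZMod 2)) = ∏ e ∈ sIdx 3, X e from by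
    rw [show sIdx 3 = {e12, e13, e14} from rfl, Finset.prod_insert (by decide),
      Finset.prod_insert (by decide),
      Finset.prod_singleton]; ring]
  exact eval_orbitSum (sIdx 3) u

lemma eval_f5 (u : Edge 4 → ZMod 2) : eval u f5 = F 4 u := by
  rw [f5, show (X e12 * X e13 * X e23 : MvPolynomial (Edge 4) (ZMod 2)) = ∏ e ∈ sIdx 4, X e from by
    rw [show sIdx 4 = {e12, e13, e23} from rfl, Finset.prod_insert (by decide),
      Finset.prod_insert (by decide),
      Finset.prod_singleton]; ring]
  exact eval_orbitSum (sIdx 4) u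

lemma eval_f6 (u : Edge 4 → ZMod 2) : eval u f6 = F 5 u := by
  rw [f6, show (X e12 * X e13 * X e24 : MvPolynomial (Edge 4) (ZMod 2)) = ∏ e ∈ sIdx 5, X e from by
    rw [show sIdx 5 = {e12, e13, e24} from rfl, Finset.prod_insert (by decide),
      Finset.prod_insert (by decide),
      Finset.prod_singleton]; ring]
  exact eval_orbitSum (sIdx 5) u

lemma eval_f7 (u : Edge 4 → ZMod 2) : eval u f7 = F 6 u := by
  rw [f7, show (X e12 * X e13 * X e14 * X e24 : MvPolynomial (Edge 4) (ZMod 2)) = ∏ e ∈ sIdx 6, X e from by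
    rw [show sIdx 6 = {e12, e13, e14, e24} from rfl, Finset.prod_insert (by decide),
      Finset.prod_insert (by decide),
      Finset.prod_insert (by decide),
      Finset.prod_singleton]; ring]
  exact eval_orbitSum (sIdx 6) u

lemma eval_f8 (u : Edge 4 → ZMod 2) : eval u f8 = F 7 u := by
  rw [f8, show (X e12 * X e13 * X e24 * X e34 : MvPolynomial (Edge 4) (ZMod 2)) = ∏ e ∈ sIdx 7, X e from by
    rw [show sIdx 7 = {e12, e13, e24, e34} from rfl, Finset.prod_insert (by decide),
      Finset.prod_insert (by decide),
      Finset.prod_insert (by decide),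
      Finset.prod_singleton]; ring]
  exact eval_orbitSum (sIdx 7) u

lemma eval_f9 (u : Edge 4 → ZMod 2) : eval u f9 = F 8 u := by
  rw [f9, show (X e12 * X e13 * X e14 * X e23 * X e24 : MvPolynomial (Edge 4) (ZMod 2)) = ∏ e ∈ sIdx 8, X e from by
    rw [show sIdx 8 = {e12, e13, e14, e23, e24} from rfl, Finset.prod_insert (by decide),
      Finset.prod_insert (by decide),
      Finset.prod_insert (by decide),
      Finset.prod_insert (by decide),
      Finset.prod_singleton]; ring]
  exact eval_orbitSum (sIdx 8) u

lemma eval_f10 (u : Edge 4 → ZMod 2) : eval u f10 = F 9 u := by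
  have h : (X e12 * X e13 * X e14 * X e23 * X e24 * X e34 : MvPolynomial (Edge 4) (ZMod 2))
      = ∏ e ∈ sIdx 9, X e := by
    rw [show sIdx 9 = {e12, e13, e14, e23, e24, e34} from rfl, Finset.prod_insert (by decide),
      Finset.prod_insert (by decide), Finset.prod_insert (by decide),
      Finset.prod_insert (by decide), Finset.prod_insert (by decide),
      Finset.prod_singleton]; ring
  rw [f10, h, show F 9 u = ∑ t ∈ orb (sIdx 9), ∏ e ∈ t, u e from rfl, orb_full,
    Finset.sum_singleton, map_prod]
  simp

lemma eval_fIdx (i : Fin 10) (u : Edge 4 → ZMod 2) : eval u (fIdx i) = F i u := by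
  fin_cases i
  exacts [eval_f1 u, eval_f2 u, eval_f3 u, eval_f4 u, eval_f5 u, eval_f6 u, eval_f7 u,
    eval_f8 u, eval_f9 u, eval_f10 u]

lemma fIdx_injective : Function.Injective fIdx := by
  intro i j h
  by_contra hne
  obtain ⟨k, hk⟩ := tbl_rows i j hne
  apply hk
  rw [← tbl_eq i k, ← tbl_eq j k, ← eval_fIdx, ← eval_fIdx, h]

lemma mem_M_iff {x : MvPolynomial (Edge 4) (ZMod 2)} : x ∈ M ↔ ∃ i, fIdx i = x := by
  constructor
  · intro h
    simp only [M, Set.mem_insert_iff, Set.mem_singleton_iff] at h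
    rcases h with h|h|h|h|h|h|h|h|h|h
    exacts [⟨0, h.symm⟩, ⟨1, h.symm⟩, ⟨2, h.symm⟩, ⟨3, h.symm⟩, ⟨4, h.symm⟩,
      ⟨5, h.symm⟩, ⟨6, h.symm⟩, ⟨7, h.symm⟩, ⟨8, h.symm⟩, ⟨9, h.symm⟩]
  · rintro ⟨i, rfl⟩
    fin_cases i
    · show f1 ∈ M; simp [M]
    · show f2 ∈ M; simp [M]
    · show f3 ∈ M; simp [M]
    · show f4 ∈ M; simp [M]
    · show f5 ∈ M; simp [M]
    · show f6 ∈ M; simp [M]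
    · show f7 ∈ M; simp [M]
    · show f8 ∈ M; simp [M]
    · show f9 ∈ M; simp [M]
    · show f10 ∈ M; simp [M]

/-! ### The boolean combinatorial core -/

def SepB (g : Fin 10 → Bool) : Prop :=
  ∀ k l : Fin 11, k ≠ l → ∃ i, g i = true ∧ tbl i k ≠ tbl i l

instance (g : Fin 10 → Bool) : Decidable (SepB g) :=
  inferInstanceAs (Decidable (∀ k l : Fin 11, k ≠ l → ∃ i, g i = true ∧ tbl i k ≠ tbl i l))

def gA : Fin 10 → Bool := ![true, true, true, true, false, false, false, true, false, false]
def gB : Fin 10 → Bool := ![true, true, true, false, true, false, false, true, false, false]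

lemma vec_eta (g : Fin 10 → Bool) :
    g = ![g 0, g 1, g 2, g 3, g 4, g 5, g 6, g 7, g 8, g 9] := by
  funext i; fin_cases i <;> rfl

set_option maxHeartbeats 8000000 in
set_option maxRecDepth 100000 in
lemma main_bool' : ∀ b0 b1 b2 b3 b4 b5 b6 b7 b8 b9 : Bool,
    (SepB ![b0,b1,b2,b3,b4,b5,b6,b7,b8,b9] ∧
      ∀ i, ![b0,b1,b2,b3,b4,b5,b6,b7,b8,b9] i = true →
        ¬ SepB (fun j => if j = i then false else ![b0,b1,b2,b3,b4,b5,b6,b7,b8,b9] j)) ↔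
      (![b0,b1,b2,b3,b4,b5,b6,b7,b8,b9] = gA ∨ ![b0,b1,b2,b3,b4,b5,b6,b7,b8,b9] = gB) := by
  decide

lemma main_bool (g : Fin 10 → Bool) :
    (SepB g ∧ ∀ i, g i = true → ¬ SepB (fun j => if j = i then false else g j)) ↔
      (g = gA ∨ g = gB) := by
  conv_lhs => rw [vec_eta g]
  conv_rhs => rw [vec_eta g]
  exact main_bool' (g 0) (g 1) (g 2) (g 3) (g 4) (g 5) (g 6) (g 7) (g 8) (g 9)

lemma sepB_mono {g h : Fin 10 → Bool} (hgh : ∀ i, g i = true → h i = true) (hg : SepB g) :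
    SepB h := fun k l hkl => by
  obtain ⟨i, hi, hne⟩ := hg k l hkl
  exact ⟨i, hgh i hi, hne⟩

/-! ### Bridge between sets of polynomials and boolean vectors -/

lemma isSep_iff {S : Set (MvPolynomial (Edge 4) (ZMod 2))} (hS : S ⊆ M) (g : Fin 10 → Bool)
    (hg : ∀ i, g i = true ↔ fIdx i ∈ S) : IsSepGraph S ↔ SepB g := by
  constructor
  · intro h k l hkl
    obtain ⟨f, hfS, hne⟩ := h (rep k) (rep l) (rep_nequiv k l hkl)
    obtain ⟨i, rfl⟩ := mem_M_iff.mp (hS hfS)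
    refine ⟨i, (hg i).mpr hfS, ?_⟩
    rwa [← tbl_eq i k, ← tbl_eq i l, ← eval_fIdx, ← eval_fIdx]
  · intro h u v huv
    obtain ⟨k, hk⟩ := rep_covers u
    obtain ⟨l, hl⟩ := rep_covers v
    have hkl : k ≠ l := by
      rintro rfl
      exact huv (sameOrbit_trans hk (sameOrbit_symm hl))
    obtain ⟨i, hgi, hne⟩ := h k l hkl
    refine ⟨fIdx i, (hg i).mp hgi, ?_⟩
    rw [eval_fIdx, eval_fIdx, F_invariant i hk, F_invariant i hl, tbl_eq, tbl_eq]
    exact hne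

def FS (h : Fin 10 → Bool) : Set (MvPolynomial (Edge 4) (ZMod 2)) :=
  {x | ∃ i, h i = true ∧ fIdx i = x}

lemma S_eq_FS {S : Set (MvPolynomial (Edge 4) (ZMod 2))} (hS : S ⊆ M) (g : Fin 10 → Bool)
    (hg : ∀ i, g i = true ↔ fIdx i ∈ S) : S = FS g := by
  ext x
  constructor
  · intro hx
    obtain ⟨i, rfl⟩ := mem_M_iff.mp (hS hx)
    exact ⟨i, (hg i).mpr hx, rfl⟩
  · rintro ⟨i, hi, rfl⟩
    exact (hg i).mp hi

lemma FS_injective : Function.Injective FS := by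
  intro g h hgh
  funext i
  have key : ∀ b : Fin 10 → Bool, b i = true ↔ fIdx i ∈ FS b := by
    intro b
    constructor
    · intro hb; exact ⟨i, hb, rfl⟩
    · rintro ⟨j, hj, hji⟩
      rwa [fIdx_injective hji] at hj
  have h2 : g i = true ↔ h i = true := by rw [key g, key h, hgh]
  exact Bool.eq_iff_iff.mpr h2

lemma FS_gA : FS gA = {f1, f2, f3, f4, f8} := by
  ext x
  simp only [FS, Set.mem_setOf_eq, Set.mem_insert_iff, Set.mem_singleton_iff]
  constructor
  · rintro ⟨i, hi, rfl⟩
    fin_cases i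
    exacts [Or.inl rfl, Or.inr (Or.inl rfl), Or.inr (Or.inr (Or.inl rfl)),
      Or.inr (Or.inr (Or.inr (Or.inl rfl))), absurd hi (by decide), absurd hi (by decide),
      absurd hi (by decide), Or.inr (Or.inr (Or.inr (Or.inr rfl))), absurd hi (by decide),
      absurd hi (by decide)]
  · rintro (rfl | rfl | rfl | rfl | rfl)
    exacts [⟨0, rfl, rfl⟩, ⟨1, rfl, rfl⟩, ⟨2, rfl, rfl⟩, ⟨3, rfl, rfl⟩, ⟨7, rfl, rfl⟩]

lemma FS_gB : FS gB = {f1, f2, f3, f5, f8} := by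
  ext x
  simp only [FS, Set.mem_setOf_eq, Set.mem_insert_iff, Set.mem_singleton_iff]
  constructor
  · rintro ⟨i, hi, rfl⟩
    fin_cases i
    exacts [Or.inl rfl, Or.inr (Or.inl rfl), Or.inr (Or.inr (Or.inl rfl)),
      absurd hi (by decide), Or.inr (Or.inr (Or.inr (Or.inl rfl))), absurd hi (by decide),
      absurd hi (by decide), Or.inr (Or.inr (Or.inr (Or.inr rfl))), absurd hi (by decide),
      absurd hi (by decide)]
  · rintro (rfl | rfl | rfl | rfl | rfl)
    exacts [⟨0, rfl, rfl⟩, ⟨1, rfl, rfl⟩, ⟨2, rfl, rfl⟩, ⟨4, rfl, rfl⟩, ⟨7, rfl, rfl⟩]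

/-- `S_1 = {f1,f2,f3,f4,f8}` and `S_2 = {f1,f2,f3,f5,f8}` are the only
separating subsets of `M` that are minimal with respect to inclusion. -/
theorem stmt9 (S : Set (MvPolynomial (Edge 4) (ZMod 2))) (hS : S ⊆ M) :
    (IsSepGraph S ∧ ∀ T ⊂ S, ¬ IsSepGraph T) ↔
      (S = {f1, f2, f3, f4, f8} ∨ S = {f1, f2, f3, f5, f8}) := by
  classical
  set g : Fin 10 → Bool := fun i => if fIdx i ∈ S then true else false with hgdef
  have hg : ∀ i, g i = true ↔ fIdx i ∈ S := by
    intro i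
    simp only [hgdef]
    split_ifs with h <;> simp [h]
  have hSF : S = FS g := S_eq_FS hS g hg
  have hmin : (∀ T ⊂ S, ¬ IsSepGraph T) ↔
      (∀ i, g i = true → ¬ SepB (fun j => if j = i then false else g j)) := by
    constructor
    · intro H i hgi hsep
      set T : Set (MvPolynomial (Edge 4) (ZMod 2)) := S \ {fIdx i} with hT
      have hTS : T ⊂ S := by
        constructor
        · exact Set.diff_subset
        · intro hsub
          have : fIdx i ∈ T := hsub ((hg i).mp hgi)
          exact this.2 rfl
      apply H T hTS
      rw [isSep_iff (hTS.1.trans hS) (fun j => if j = i then false else g j)]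
      · exact hsep
      · intro j
        by_cases hji : j = i
        · subst hji
          simp [hT]
        · simp only [if_neg hji, hT, Set.mem_diff, Set.mem_singleton_iff, hg j]
          constructor
          · intro h
            exact ⟨h, fun he => hji (fIdx_injective he)⟩
          · exact fun h => h.1
    · intro H T hTS hsep
      set h : Fin 10 → Bool := fun j => if fIdx j ∈ T then true else false with hhdef
      have hh : ∀ j, h j = true ↔ fIdx j ∈ T := by
        intro j
        simp only [hhdef]
        split_ifs with hj <;> simp [hj]
      have hsepB : SepB h := (isSep_iff (hTS.1.trans hS) h hh).mp hsep
      obtain ⟨x, hxS, hxT⟩ := Set.exists_of_ssubset hTS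
      obtain ⟨i, rfl⟩ := mem_M_iff.mp (hS hxS)
      have hgi : g i = true := (hg i).mpr hxS
      apply H i hgi
      apply sepB_mono (g := h)
      · intro j hj
        by_cases hji : j = i
        · subst hji
          exact absurd ((hh j).mp hj) hxT
        · rw [if_neg hji]
          exact (hg j).mpr (hTS.1 ((hh j).mp hj))
      · exact hsepB
  rw [isSep_iff hS g hg, hmin, main_bool g]
  constructor
  · rintro (h | h)
    · left; rw [hSF, h, FS_gA]
    · right; rw [hSF, h, FS_gB]
  · rintro (h | h)
    · left
      apply FS_injective
      rw [← hSF, h, FS_gA]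
    · right
      apply FS_injective
      rw [← hSF, h, FS_gB]

end S4graphs
end

section
/- For every 0 ≤ b < a ≤ n with Δ = a − b, the invariants {s_{2^r} | 0 ≤ r ≤ ⌊log_2(Δ)⌋} separate the points e_a and e_b of F_2^n; that is, there exists r with 0 ≤ r ≤ ⌊log_2(a−b)⌋ such that C(a, 2^r) ≢ C(b, 2^r) (mod 2). -/
open MvPolynomial

/-- `e_i ∈ F_2^n`: the vector whose first `i` coordinates are `1` and the rest `0`. -/
def eVec (n i : ℕ) : Fin n → ZMod 2 := fun j => if (j : ℕ) < i then 1 else 0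

/-- Lucas: `C(m, 2^r) % 2` is the `r`-th binary digit of `m`. -/
lemma choose_two_pow_mod_two (m r : ℕ) :
    Nat.choose m (2 ^ r) % 2 = m / 2 ^ r % 2 := by
  have h := Choose.choose_modEq_choose_mul_prod_range_choose
    (n := m) (k := 2 ^ r) (p := 2) r
  have h1 : (2 ^ r) / 2 ^ r = 1 := Nat.div_self (Nat.two_pow_pos r)
  have h2 : ∀ i ∈ Finset.range r, Nat.choose (m / 2 ^ i % 2) (2 ^ r / 2 ^ i % 2) = 1 := by
    intro i hi
    rw [Finset.mem_range] at hi
    have : 2 ^ r / 2 ^ i = 2 ^ (r - i) := Nat.pow_div hi.le (by norm_num)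
    rw [this]
    have : 2 ^ (r - i) % 2 = 0 := by
      have : (2:ℕ) ∣ 2 ^ (r - i) := dvd_pow_self 2 (Nat.sub_ne_zero_of_lt hi)
      omega
    rw [this, Nat.choose_zero_right]
  rw [h1, Nat.choose_one_right, Finset.prod_congr rfl h2, Finset.prod_const_one] at h
  rw [Nat.cast_one, mul_one] at h
  have h' : Nat.choose m (2 ^ r) ≡ m / 2 ^ r [MOD 2] := by
    rw [← Int.natCast_modEq_iff]; exact_mod_cast h
  exact h'

lemma eval_esymm_eVec (n i t : ℕ) (hi : i ≤ n) :
    eval (eVec n i) (esymm (Fin n) (ZMod 2) t) = (Nat.choose i t : ZMod 2) := by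
  classical
  set S : Finset (Fin n) := Finset.univ.filter (fun j : Fin n => (j : ℕ) < i) with hS
  have hScard : S.card = i := by
    have : S = Finset.map (Fin.castLEEmb hi) Finset.univ := by
      ext x
      simp only [hS, Finset.mem_filter, Finset.mem_univ, true_and, Finset.mem_map,
        Fin.castLEEmb_apply]
      constructor
      · intro hx
        exact ⟨⟨(x : ℕ), hx⟩, Fin.ext rfl⟩
      · rintro ⟨y, rfl⟩
        exact y.isLt
    rw [this, Finset.card_map, Finset.card_univ, Fintype.card_fin]
  rw [esymm, map_sum]
  have key : ∀ s ∈ Finset.powersetCard t (Finset.univ : Finset (Fin n)),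
      eval (eVec n i) (∏ j ∈ s, X j) = if s ⊆ S then 1 else 0 := by
    intro s _
    rw [eval_prod]
    by_cases h : s ⊆ S
    · rw [if_pos h]
      apply Finset.prod_eq_one
      intro j hj
      have : (j : ℕ) < i := by
        have := h hj; simp only [hS, Finset.mem_filter] at this; exact this.2
      simp [eVec, this]
    · rw [if_neg h]
      obtain ⟨j, hj, hjS⟩ := Finset.not_subset.mp h
      apply Finset.prod_eq_zero hj
      have : ¬ (j : ℕ) < i := by
        intro hc; exact hjS (by simp [hS, hc])
      simp [eVec, this]
  rw [Finset.sum_congr rfl key, Finset.sum_boole]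
  have hfilter : (Finset.powersetCard t (Finset.univ : Finset (Fin n))).filter (· ⊆ S)
      = Finset.powersetCard t S := by
    ext s
    simp only [Finset.mem_filter, Finset.mem_powersetCard, Finset.subset_univ, true_and]
    tauto
  rw [hfilter, Finset.card_powersetCard, hScard]

/-- for `0 ≤ b < a ≤ n` with `Δ = a - b`, the invariants
`{s_{2^r} | 0 ≤ r ≤ ⌊log_2 Δ⌋}` separate `e_a` and `e_b`; that is, there is an
`r ≤ ⌊log_2(a-b)⌋` with `C(a, 2^r) ≢ C(b, 2^r) (mod 2)`. -/
theorem stmt13 (n a b : ℕ) (hb : b < a) (ha : a ≤ n) :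
    ∃ r, r ≤ Nat.log 2 (a - b) ∧
      eval (eVec n a) (esymm (Fin n) (ZMod 2) (2 ^ r)) ≠
        eval (eVec n b) (esymm (Fin n) (ZMod 2) (2 ^ r)) ∧
      Nat.choose a (2 ^ r) % 2 ≠ Nat.choose b (2 ^ r) % 2 := by
  classical
  have hne : a ≠ b := hb.ne'
  have hex : ∃ r, Nat.testBit a r ≠ Nat.testBit b r := Nat.exists_testBit_ne_of_ne hne
  let r := Nat.find hex
  have hr : Nat.testBit a r ≠ Nat.testBit b r := Nat.find_spec hex
  have hlow : ∀ i < r, Nat.testBit a i = Nat.testBit b i := by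
    intro i hi
    have := Nat.find_min hex hi
    tauto
  -- a ≡ b mod 2^r
  have hmod : a % 2 ^ r = b % 2 ^ r := by
    apply Nat.eq_of_testBit_eq
    intro i
    rw [Nat.testBit_mod_two_pow, Nat.testBit_mod_two_pow]
    by_cases h : i < r
    · simp [h, hlow i h]
    · simp [h]
  have hdvd : 2 ^ r ∣ a - b := (Nat.modEq_iff_dvd' hb.le).mp hmod.symm
  have hle : 2 ^ r ≤ a - b := Nat.le_of_dvd (by omega) hdvd
  have hrlog : r ≤ Nat.log 2 (a - b) := Nat.le_log_of_pow_le (by norm_num) hle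
  have hchoose : Nat.choose a (2 ^ r) % 2 ≠ Nat.choose b (2 ^ r) % 2 := by
    rw [choose_two_pow_mod_two, choose_two_pow_mod_two]
    intro h
    apply hr
    rw [Nat.testBit_eq_decide_div_mod_eq, Nat.testBit_eq_decide_div_mod_eq, h]
  refine ⟨r, hrlog, ?_, hchoose⟩
  rw [eval_esymm_eVec n a _ ha, eval_esymm_eVec n b _ (le_trans hb.le ha)]
  intro h
  rw [ZMod.natCast_eq_natCast_iff'] at h
  exact hchoose h
end

section
/- Let S_n act on V = F_2^n by permuting coordinates. Then S_{n,1} = {s_{2^r} | 0 ≤ r ≤ ⌊log_2(n)⌋} is a minimal separating set for F_2[V]^{S_n} containing the least possible number of elements for a separating set, namely ⌈log_2(n+1)⌉ elements. -/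
open MvPolynomial Finset

/-- The set `S_{n,1} = {s_{2^r} | 0 ≤ r ≤ ⌊log_2 n⌋}` of elementary symmetric
polynomials over `F_2` whose degree is a power of two at most `n`. -/
def Sn1 (n : ℕ) : Set (MvPolynomial (Fin n) (ZMod 2)) :=
  {f | ∃ r ≤ Nat.log 2 n, f = esymm (Fin n) (ZMod 2) (2 ^ r)}

/-- Two points of `F_2^n` lie in the same `S_n`-orbit (for the permutation action). -/
def SymSameOrbit {n : ℕ} (u v : Fin n → ZMod 2) : Prop :=
  ∃ σ : Equiv.Perm (Fin n), ∀ i, u (σ i) = v i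

/-- The weight (number of coordinates equal to 1) of a vector in `F_2^n`. -/
def wt {n : ℕ} (u : Fin n → ZMod 2) : ℕ := #(univ.filter (fun i => u i = 1))

lemma zmod2_cases (x : ZMod 2) : x = 0 ∨ x = 1 := by revert x; decide

lemma wt_le {n : ℕ} (u : Fin n → ZMod 2) : wt u ≤ n := by
  simpa [wt] using (card_filter_le univ (fun i => u i = 1)).trans (by simp)

lemma eval_esymm {n : ℕ} (k : ℕ) (u : Fin n → ZMod 2) :
    eval u (esymm (Fin n) (ZMod 2) k) = ((wt u).choose k : ZMod 2) := by
  classical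
  rw [esymm, map_sum]
  have h1 : ∀ t : Finset (Fin n), eval u (∏ i ∈ t, (X i : MvPolynomial (Fin n) (ZMod 2)))
      = if t ⊆ univ.filter (fun i => u i = 1) then 1 else 0 := by
    intro t
    rw [map_prod]
    simp only [eval_X]
    by_cases h : t ⊆ univ.filter (fun i => u i = 1)
    · rw [if_pos h, Finset.prod_eq_one]
      intro i hi
      simpa using (mem_filter.mp (h hi)).2
    · rw [if_neg h]
      obtain ⟨i, hit, hiu⟩ := not_subset.mp h
      refine Finset.prod_eq_zero hit ?_
      rcases zmod2_cases (u i) with h0 | h1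
      · exact h0
      · exact absurd (mem_filter.mpr ⟨mem_univ i, h1⟩) hiu
  simp only [h1]
  rw [Finset.sum_boole]
  have h2 : (powersetCard k (univ : Finset (Fin n))).filter
      (fun t => t ⊆ univ.filter (fun i => u i = 1)) =
      powersetCard k (univ.filter (fun i => u i = 1)) := by
    ext t
    simp only [mem_filter, mem_powersetCard, subset_univ, true_and]
    tauto
  rw [h2, card_powersetCard]
  rfl

lemma orbit_iff {n : ℕ} (u v : Fin n → ZMod 2) : SymSameOrbit u v ↔ wt u = wt v := by
  classical
  constructor
  · rintro ⟨σ, hσ⟩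
    unfold wt
    have : univ.filter (fun i => u i = 1) =
        (univ.filter (fun i => v i = 1)).image σ := by
      ext x
      simp only [mem_filter, mem_univ, true_and, mem_image]
      constructor
      · intro hx
        exact ⟨σ⁻¹ x, by rw [← hσ (σ⁻¹ x)]; simpa using hx, by simp⟩
      · rintro ⟨y, hy, rfl⟩
        rw [hσ y]; exact hy
    rw [this, card_image_of_injective _ σ.injective]
  · intro h
    have hc : Fintype.card {x // v x = 1} = Fintype.card {x // u x = 1} := by
      rw [Fintype.card_subtype, Fintype.card_subtype]
      exact h.symm
    have hc' : Fintype.card {x // ¬ v x = 1} = Fintype.card {x // ¬ u x = 1} := by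
      rw [Fintype.card_subtype_compl, Fintype.card_subtype_compl, hc]
    have hleft : ∀ {α : Type} {p q : α → Prop} [DecidablePred p] [DecidablePred q]
        (e : { x // p x } ≃ { x // q x }) (f : { x // ¬p x } ≃ { x // ¬q x })
        (a : α) (h : p a), Equiv.subtypeCongr e f a = e ⟨a, h⟩ := by
      intro α p q _ _ e f a h
      simp [Equiv.subtypeCongr, h]
    have hright : ∀ {α : Type} {p q : α → Prop} [DecidablePred p] [DecidablePred q]
        (e : { x // p x } ≃ { x // q x }) (f : { x // ¬p x } ≃ { x // ¬q x })
        (a : α) (h : ¬ p a), Equiv.subtypeCongr e f a = f ⟨a, h⟩ := by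
      intro α p q _ _ e f a h
      simp [Equiv.subtypeCongr, h]
    refine ⟨Equiv.subtypeCongr (Fintype.equivOfCardEq hc) (Fintype.equivOfCardEq hc'), ?_⟩
    intro i
    by_cases hv : v i = 1
    · rw [hleft (Fintype.equivOfCardEq hc) (Fintype.equivOfCardEq hc') i hv]
      rw [((Fintype.equivOfCardEq hc) ⟨i, hv⟩).2, hv]
    · rw [hright (Fintype.equivOfCardEq hc) (Fintype.equivOfCardEq hc') i hv]
      have h1 := ((Fintype.equivOfCardEq hc') ⟨i, hv⟩).2
      rcases zmod2_cases (u ((Fintype.equivOfCardEq hc') ⟨i, hv⟩)) with h0 | h0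
      · rcases zmod2_cases (v i) with hv0 | hv0
        · rw [h0, hv0]
        · exact absurd hv0 hv
      · exact absurd h0 h1

lemma choose_two_pow (r m : ℕ) :
    ((m.choose (2 ^ r) : ZMod 2)) = ((m / 2 ^ r % 2 : ℕ) : ZMod 2) := by
  induction r generalizing m with
  | zero =>
    simp only [pow_zero, Nat.choose_one_right, Nat.div_one]
    rw [ZMod.natCast_eq_natCast_iff]
    exact (Nat.mod_modEq m 2).symm
  | succ r ih =>
    have h := @Choose.choose_modEq_choose_mod_mul_choose_div_nat m (2 ^ (r + 1)) 2 ⟨Nat.prime_two⟩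
    have h2 : 2 ^ (r + 1) % 2 = 0 := by
      simp [pow_succ, Nat.mul_mod_left]
    have h3 : 2 ^ (r + 1) / 2 = 2 ^ r := by
      rw [pow_succ, Nat.mul_div_cancel]; norm_num
    rw [h2, h3, Nat.choose_zero_right, one_mul] at h
    rw [(ZMod.natCast_eq_natCast_iff _ _ _).mpr h, ih (m / 2)]
    rw [Nat.div_div_eq_div_mul, ← pow_succ']

lemma bits_ne {n a b : ℕ} (ha : a ≤ n) (hb : b ≤ n) (hab : a ≠ b) :
    ∃ r ≤ Nat.log 2 n, a / 2 ^ r % 2 ≠ b / 2 ^ r % 2 := by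
  by_contra hcon
  push_neg at hcon
  apply hab
  apply Nat.eq_of_testBit_eq
  intro i
  rcases le_or_gt i (Nat.log 2 n) with hi | hi
  · simp [Nat.testBit_eq_decide_div_mod_eq, hcon i hi]
  · have hpow : n < 2 ^ i :=
      lt_of_lt_of_le (Nat.lt_pow_succ_log_self one_lt_two n)
        (Nat.pow_le_pow_right (by norm_num) hi)
    rw [Nat.testBit_eq_false_of_lt (lt_of_le_of_lt ha hpow),
      Nat.testBit_eq_false_of_lt (lt_of_le_of_lt hb hpow)]

lemma cast_mod_two_ne {a b : ℕ} (h : a % 2 ≠ b % 2) :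
    ((a % 2 : ℕ) : ZMod 2) ≠ ((b % 2 : ℕ) : ZMod 2) := by
  intro hh
  rw [ZMod.natCast_eq_natCast_iff] at hh
  have h2 : a % 2 % 2 = b % 2 % 2 := hh
  omega

/-- The standard point with `k` ones. -/
def ept {n : ℕ} (k : ℕ) : Fin n → ZMod 2 := fun i => if (i : ℕ) < k then 1 else 0

lemma wt_ept {n k : ℕ} (hk : k ≤ n) : wt (ept k : Fin n → ZMod 2) = k := by
  classical
  unfold wt ept
  have h1 : (univ.filter (fun i : Fin n => (if (i : ℕ) < k then (1 : ZMod 2) else 0) = 1)) =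
      univ.filter (fun i : Fin n => (i : ℕ) < k) := by
    ext i
    by_cases h : (i : ℕ) < k <;> simp [h]
  rw [h1]
  have h2 : univ.filter (fun i : Fin n => (i : ℕ) < k) =
      (univ : Finset (Fin k)).map ⟨Fin.castLE hk, Fin.castLE_injective hk⟩ := by
    ext i
    simp only [mem_filter, mem_univ, true_and, mem_map, Function.Embedding.coeFn_mk]
    constructor
    · intro h
      exact ⟨⟨(i : ℕ), h⟩, by ext; simp [Fin.castLE]⟩
    · rintro ⟨j, rfl⟩
      simp [Fin.castLE, j.2]
  rw [h2, card_map, card_univ, Fintype.card_fin]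

lemma clog_eq_log_succ {n : ℕ} (hn : 1 ≤ n) :
    Nat.clog 2 (n + 1) = Nat.log 2 n + 1 := by
  apply le_antisymm
  · rw [Nat.clog_le_iff_le_pow one_lt_two]
    exact Nat.lt_pow_succ_log_self one_lt_two n
  · by_contra h
    push_neg at h
    have h2 := (Nat.clog_le_iff_le_pow one_lt_two).mp (Nat.lt_succ_iff.mp h)
    have h3 := Nat.pow_log_le_self 2 (by omega : n ≠ 0)
    omega

/-- `S_{n,1} = {s_{2^r} | 0 ≤ r ≤ ⌊log_2 n⌋}` is a minimal separating set
for `F_2[V]^{S_n}` containing the least possible number of elements for a separating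
set, namely `⌈log_2(n+1)⌉` of them. -/
theorem stmt14 (n : ℕ) (hn : 1 ≤ n) :
    -- S_{n,1} is separating
    (∀ u v : Fin n → ZMod 2, ¬ SymSameOrbit u v →
      ∃ f ∈ Sn1 n, eval u f ≠ eval v f) ∧
    -- it has exactly ⌈log_2(n+1)⌉ elements
    (Sn1 n).ncard = Nat.clog 2 (n + 1) ∧
    -- and no separating set of symmetric polynomials has fewer elements
    (∀ (r : ℕ) (l : Fin r → MvPolynomial (Fin n) (ZMod 2)),
      (∀ i, ∀ σ : Equiv.Perm (Fin n), rename (fun j => σ j) (l i) = l i) →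
      (∀ u v : Fin n → ZMod 2, ¬ SymSameOrbit u v →
        ∃ i, eval u (l i) ≠ eval v (l i)) →
      Nat.clog 2 (n + 1) ≤ r) := by
  refine ⟨?_, ?_, ?_⟩
  · -- separating
    intro u v huv
    have hwt : wt u ≠ wt v := fun h => huv ((orbit_iff u v).mpr h)
    obtain ⟨r, hr, hne⟩ := bits_ne (wt_le u) (wt_le v) hwt
    refine ⟨esymm (Fin n) (ZMod 2) (2 ^ r), ⟨r, hr, rfl⟩, ?_⟩
    rw [eval_esymm, eval_esymm, choose_two_pow, choose_two_pow]
    exact cast_mod_two_ne (by omega)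
  · -- cardinality
    have himg : Sn1 n = (fun r => esymm (Fin n) (ZMod 2) (2 ^ r)) '' Set.Iic (Nat.log 2 n) := by
      ext f
      simp only [Sn1, Set.mem_setOf_eq, Set.mem_image, Set.mem_Iic]
      constructor
      · rintro ⟨r, hr, rfl⟩; exact ⟨r, hr, rfl⟩
      · rintro ⟨r, hr, rfl⟩; exact ⟨r, hr, rfl⟩
    have hinj : Set.InjOn (fun r => esymm (Fin n) (ZMod 2) (2 ^ r)) (Set.Iic (Nat.log 2 n)) := by
      have key : ∀ r r', r ≤ Nat.log 2 n → r < r' →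
          esymm (Fin n) (ZMod 2) (2 ^ r) ≠ esymm (Fin n) (ZMod 2) (2 ^ r') := by
        intro r r' hr hlt heq
        have h2r : 2 ^ r ≤ n :=
          le_trans (Nat.pow_le_pow_right (by norm_num) hr) (Nat.pow_log_le_self 2 (by omega))
        have h1 := eval_esymm (n := n) (2 ^ r) (ept (2 ^ r))
        have h2 := eval_esymm (n := n) (2 ^ r') (ept (2 ^ r))
        rw [heq] at h1
        rw [h1, wt_ept h2r, Nat.choose_self,
          Nat.choose_eq_zero_of_lt (Nat.pow_lt_pow_right one_lt_two hlt)] at h2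
        simp at h2
      intro r hr r' hr' heq
      rcases lt_trichotomy r r' with h | h | h
      · exact absurd heq (key r r' hr h)
      · exact h
      · exact absurd heq.symm (key r' r hr' h)
    rw [himg, Set.ncard_image_of_injOn hinj, clog_eq_log_succ hn,
      ← Finset.coe_Iic, Set.ncard_coe_finset, Nat.card_Iic]
  · -- lower bound
    intro r l _ hsep
    have hinj : Function.Injective
        (fun k : Fin (n + 1) => fun i => eval (ept (k : ℕ) : Fin n → ZMod 2) (l i)) := by
      intro k k' hkk
      by_contra hne
      have hwt : wt (ept (k : ℕ) : Fin n → ZMod 2) ≠ wt (ept (k' : ℕ) : Fin n → ZMod 2) := by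
        rw [wt_ept (Nat.lt_succ_iff.mp k.2), wt_ept (Nat.lt_succ_iff.mp k'.2)]
        exact fun h => hne (Fin.ext h)
      obtain ⟨i, hi⟩ := hsep _ _ (fun h => hwt ((orbit_iff _ _).mp h))
      exact hi (congrFun hkk i)
    have hcard := Fintype.card_le_of_injective _ hinj
    rw [Fintype.card_fin, Fintype.card_fun, Fintype.card_fin, ZMod.card] at hcard
    rw [Nat.clog_le_iff_le_pow one_lt_two]
    exact hcard
end

section
/- Let J ⊂ {1,...,n} and A ⊂ ℕ^m be subsets such that S_J = {s_j | j ∈ J} is a separating set for F[V]^{S_n} and {σ_t(α) | 1 ≤ t ≤ n, α ∈ A} is a separating set for F[V^m]^{S_n}. Then {σ_j(α) | j ∈ J, α ∈ A} is a separating set for F[V^m]^{S_n}. -/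
open MvPolynomial

/-- The elementary multisymmetric polynomial
`σ_t(α) = Σ_{i_1 < … < i_t} x^α_{i_1} ⋯ x^α_{i_t}` in the variables
`x(j)_i` (for `1 ≤ i ≤ n`, `1 ≤ j ≤ m`), where `x^α_i = ∏_j x(j)_i^{α_j}`.
The variable `x(j)_i` is indexed by the pair `(j, i)`. -/
noncomputable def msym {F : Type*} [CommSemiring F] (n m : ℕ) (t : ℕ) (α : Fin m → ℕ) :
    MvPolynomial (Fin m × Fin n) F :=
  ∑ s ∈ Finset.powersetCard t (Finset.univ : Finset (Fin n)),
    ∏ i ∈ s, ∏ j, (X (j, i) : MvPolynomial (Fin m × Fin n) F) ^ (α j)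

lemma eval_msym {F : Type*} [CommSemiring F] (n m t : ℕ) (α : Fin m → ℕ)
    (u : Fin m × Fin n → F) :
    eval u (msym n m t α) = eval (fun i => ∏ j, u (j, i) ^ α j) (esymm (Fin n) F t) := by
  simp [msym, esymm, eval_sum, eval_prod]

/-- if `{s_j | j ∈ J}` is separating for `F[V]^{S_n}` and
`{σ_t(α) | 1 ≤ t ≤ n, α ∈ A}` is separating for `F[V^m]^{S_n}`, then
`{σ_j(α) | j ∈ J, α ∈ A}` is separating for `F[V^m]^{S_n}`. -/
theorem stmt15 {F : Type*} [Field F] [Fintype F] (n m : ℕ)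
    (J : Set ℕ) (hJ : ∀ j ∈ J, 1 ≤ j ∧ j ≤ n)
    (A : Set (Fin m → ℕ))
    (hSJ : ∀ u v : Fin n → F,
      (¬ ∃ σ : Equiv.Perm (Fin n), ∀ i, u (σ i) = v i) →
      ∃ j ∈ J, eval u (esymm (Fin n) F j) ≠ eval v (esymm (Fin n) F j))
    (hA : ∀ u v : Fin m × Fin n → F,
      (¬ ∃ σ : Equiv.Perm (Fin n), ∀ p : Fin m × Fin n, u (p.1, σ p.2) = v p) →
      ∃ t, 1 ≤ t ∧ t ≤ n ∧ ∃ α ∈ A, eval u (msym n m t α) ≠ eval v (msym n m t α)) :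
    ∀ u v : Fin m × Fin n → F,
      (¬ ∃ σ : Equiv.Perm (Fin n), ∀ p : Fin m × Fin n, u (p.1, σ p.2) = v p) →
      ∃ j ∈ J, ∃ α ∈ A, eval u (msym n m j α) ≠ eval v (msym n m j α) := by
  intro u v huv
  obtain ⟨t, _, _, α, hαA, hne⟩ := hA u v huv
  by_contra h
  push_neg at h
  apply hne
  set uα : Fin n → F := fun i => ∏ j, u (j, i) ^ α j with huα
  set vα : Fin n → F := fun i => ∏ j, v (j, i) ^ α j with hvα
  have hsep : ∃ σ : Equiv.Perm (Fin n), ∀ i, uα (σ i) = vα i := by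
    by_contra hc
    obtain ⟨j, hjJ, hne2⟩ := hSJ uα vα hc
    have := h j hjJ α hαA
    rw [eval_msym, eval_msym] at this
    exact hne2 this
  obtain ⟨σ, hσ⟩ := hsep
  have hveq : vα = uα ∘ σ := funext fun i => (hσ i).symm
  rw [eval_msym, eval_msym]
  show eval uα (esymm (Fin n) F t) = eval vα (esymm (Fin n) F t)
  rw [hveq, ← eval_rename, esymm_isSymmetric (Fin n) F t σ]
end
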